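/- arXiv:2312.16340 — 3 statements merged into one kernel-verified Lean document; each statement's English description precedes it below -/
import Mathlib

section
/- (Robbins–Siegmund) Let (Ω, 𝒜, P) be a probability space with a filtration (𝒜_i)_{i≥0}, and let (U_i), (β_i), (ξ_i), (ρ_i) be sequences of nonnegative, integrable random variables such that U_i, β_i, ξ_i, ρ_i are 𝒜_i-measurable and E[U_{i+1} | 𝒜_i] ≤ (1 + β_i) U_i + ξ_i − ρ_i almost surely for every i ≥ 0. Then, almost surely on the event {Σ_{i} β_i < ∞ and Σ_{i} ξ_i < ∞}, the sequence U_i converges to a finite limit and Σ_{i} ρ_i < ∞. -/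
open MeasureTheory Filter

noncomputable section

/-- Robbins–Siegmund: if nonnegative, integrable, adapted processes satisfy
`E[U_{i+1} | 𝒜_i] ≤ (1 + β_i)U_i + ξ_i - ρ_i` a.s. for every `i`, then almost surely, on the
event where `Σ β_i < ∞` and `Σ ξ_i < ∞`, the sequence `U_i` converges to a finite limit and
`Σ ρ_i < ∞`. -/
theorem robbins_siegmund {Ω : Type} {m0 : MeasurableSpace Ω}
    (P : Measure Ω) [IsProbabilityMeasure P] (ℱ : Filtration ℕ m0)
    (U β ξ ρ : ℕ → Ω → ℝ)
    (hUnn : ∀ i ω, 0 ≤ U i ω) (hβnn : ∀ i ω, 0 ≤ β i ω)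
    (hξnn : ∀ i ω, 0 ≤ ξ i ω) (hρnn : ∀ i ω, 0 ≤ ρ i ω)
    (hUint : ∀ i, Integrable (U i) P) (hβint : ∀ i, Integrable (β i) P)
    (hξint : ∀ i, Integrable (ξ i) P) (hρint : ∀ i, Integrable (ρ i) P)
    (hUmeas : ∀ i, StronglyMeasurable[ℱ i] (U i))
    (hβmeas : ∀ i, StronglyMeasurable[ℱ i] (β i))
    (hξmeas : ∀ i, StronglyMeasurable[ℱ i] (ξ i))
    (hρmeas : ∀ i, StronglyMeasurable[ℱ i] (ρ i))
    (hrec : ∀ i, (P[U (i + 1)|ℱ i]) ≤ᵐ[P]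
      fun ω => (1 + β i ω) * U i ω + ξ i ω - ρ i ω) :
    ∀ᵐ ω ∂P,
      (Summable (fun i => β i ω) ∧ Summable (fun i => ξ i ω)) →
        (∃ c : ℝ, Tendsto (fun i => U i ω) atTop (nhds c)) ∧
          Summable (fun i => ρ i ω) := by
  classical
  -- the normalizing product `A n = ∏_{j<n} (1 + β j)`
  set A : ℕ → Ω → ℝ := fun n ω => ∏ j ∈ Finset.range n, (1 + β j ω) with hA_def
  have hAsucc : ∀ n ω, A (n + 1) ω = A n ω * (1 + β n ω) := by
    intro n ω
    show ∏ j ∈ Finset.range (n+1), (1 + β j ω) = (∏ j ∈ Finset.range n, (1 + β j ω)) * (1 + β n ω)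
    exact Finset.prod_range_succ _ _
  have hA1 : ∀ n ω, 1 ≤ A n ω := by
    intro n ω
    induction n with
    | zero =>
      show (1:ℝ) ≤ ∏ j ∈ Finset.range 0, (1 + β j ω)
      simp
    | succ n ih =>
      rw [hAsucc]
      nlinarith [hβnn n ω]
  have hApos : ∀ n ω, 0 < A n ω := fun n ω => lt_of_lt_of_le one_pos (hA1 n ω)
  have hAmono : ∀ ω, Monotone fun n => A n ω := by
    intro ω
    apply monotone_nat_of_le_succ
    intro n
    rw [hAsucc]
    nlinarith [hApos n ω, hβnn n ω]
  have hAmeas : ∀ n, StronglyMeasurable[ℱ n] (A (n + 1)) := by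
    intro n
    apply Finset.stronglyMeasurable_fun_prod
    intro j hj
    have h1 : StronglyMeasurable[ℱ j] fun ω => 1 + β j ω :=
      stronglyMeasurable_const.add (hβmeas j)
    exact h1.mono (ℱ.mono (Nat.lt_succ_iff.mp (Finset.mem_range.mp hj)))
  have hAmeas' : ∀ n, StronglyMeasurable[ℱ n] (A n) := by
    intro n
    cases n with
    | zero => simpa [hA_def] using (stronglyMeasurable_const : StronglyMeasurable[ℱ 0] fun _ : Ω => (1 : ℝ))
    | succ n => exact (hAmeas n).mono (ℱ.mono (Nat.le_succ n))
  -- integrability of quotients by `A`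
  have hdiv_int : ∀ (f : Ω → ℝ) (n : ℕ), Integrable f P → StronglyMeasurable f →
      (∀ ω, 0 ≤ f ω) → Integrable (fun ω => f ω / A n ω) P := by
    intro f n hfint hfmeas hfnn
    refine hfint.mono
      ((hfmeas.measurable.div ((hAmeas' n).mono (ℱ.le n)).measurable).aestronglyMeasurable) ?_
    filter_upwards with ω
    rw [Real.norm_eq_abs, Real.norm_eq_abs, abs_of_nonneg (div_nonneg (hfnn ω) (hApos n ω).le),
      abs_of_nonneg (hfnn ω)]
    exact div_le_self (hfnn ω) (hA1 n ω)
  -- the compensator sums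
  set Sxi : ℕ → Ω → ℝ := fun n ω => ∑ j ∈ Finset.range n, ξ j ω / A (j + 1) ω with hSxi_def
  set Srho : ℕ → Ω → ℝ := fun n ω => ∑ j ∈ Finset.range n, ρ j ω / A (j + 1) ω with hSrho_def
  set X : ℕ → Ω → ℝ := fun n ω => U n ω / A n ω + Srho n ω - Sxi n ω with hX_def
  have hterm_int : ∀ (f : ℕ → Ω → ℝ), (∀ i, Integrable (f i) P) →
      (∀ i, StronglyMeasurable[ℱ i] (f i)) → (∀ i ω, 0 ≤ f i ω) → ∀ n,
      Integrable (fun ω => ∑ j ∈ Finset.range n, f j ω / A (j + 1) ω) P := by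
    intro f hint hmeas hnn n
    apply integrable_finset_sum
    intro j hj
    exact hdiv_int (f j) (j + 1) (hint j) ((hmeas j).mono (ℱ.le j)) fun ω => hnn j ω
  have hXint : ∀ n, Integrable (X n) P := by
    intro n
    exact ((hdiv_int (U n) n (hUint n) ((hUmeas n).mono (ℱ.le n)) fun ω => hUnn n ω).add
      (hterm_int ρ hρint hρmeas hρnn n)).sub (hterm_int ξ hξint hξmeas hξnn n)
  have hSmeas : ∀ (f : ℕ → Ω → ℝ), (∀ i, StronglyMeasurable[ℱ i] (f i)) → ∀ (n N : ℕ),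
      N ≤ n + 1 →
      StronglyMeasurable[ℱ n] (fun ω => ∑ j ∈ Finset.range N, f j ω / A (j + 1) ω) := by
    intro f hf n N hN
    apply Finset.stronglyMeasurable_fun_sum
    intro j hj
    have hjn : j ≤ n := by have := Finset.mem_range.mp hj; omega
    exact (((hf j).mono (ℱ.mono hjn)).measurable.div
      ((hAmeas j).mono (ℱ.mono hjn)).measurable).stronglyMeasurable
  have hXmeas : ∀ n, StronglyMeasurable[ℱ n] (X n) := by
    intro n
    exact (((hUmeas n).measurable.div (hAmeas' n).measurable).stronglyMeasurable.add
      (hSmeas ρ hρmeas n n (Nat.le_succ n))).sub (hSmeas ξ hξmeas n n (Nat.le_succ n))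
  -- the supermartingale property of `X`
  have hXsuper : ∀ n, P[X (n + 1)|ℱ n] ≤ᵐ[P] X n := by
    intro n
    have hg : Integrable ((fun ω => (A (n + 1) ω)⁻¹) * U (n + 1)) P := by
      have h1 := hdiv_int (U (n + 1)) (n + 1) (hUint (n + 1))
        ((hUmeas (n + 1)).mono (ℱ.le (n + 1))) fun ω => hUnn (n + 1) ω
      apply h1.congr
      filter_upwards with ω
      simp [div_eq_inv_mul]
    have hh : Integrable (fun ω => Srho (n + 1) ω - Sxi (n + 1) ω) P :=
      (hterm_int ρ hρint hρmeas hρnn (n + 1)).sub (hterm_int ξ hξint hξmeas hξnn (n + 1))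
    have hsplit : X (n + 1) =
        (fun ω => (A (n + 1) ω)⁻¹) * U (n + 1) + fun ω => Srho (n + 1) ω - Sxi (n + 1) ω := by
      funext ω
      simp only [hX_def, Pi.add_apply, Pi.mul_apply]
      rw [div_eq_inv_mul]
      ring
    have h1 : P[X (n + 1)|ℱ n] =ᵐ[P]
        fun ω => (A (n + 1) ω)⁻¹ * (P[U (n + 1)|ℱ n]) ω + (Srho (n + 1) ω - Sxi (n + 1) ω) := by
      rw [hsplit]
      refine (condExp_add hg hh _).trans ?_
      have h2 := condExp_mul_of_stronglyMeasurable_left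
        ((hAmeas n).measurable.inv.stronglyMeasurable) hg (hUint (n + 1))
      have h3 : P[(fun ω => Srho (n + 1) ω - Sxi (n + 1) ω)|ℱ n] =
          fun ω => Srho (n + 1) ω - Sxi (n + 1) ω :=
        condExp_of_stronglyMeasurable (ℱ.le n)
          ((hSmeas ρ hρmeas n (n + 1) le_rfl).sub (hSmeas ξ hξmeas n (n + 1) le_rfl)) hh
      rw [h3]
      filter_upwards [h2] with ω hω
      simp only [Pi.add_apply, Pi.mul_apply] at hω ⊢
      exact congrArg (· + (Srho (n + 1) ω - Sxi (n + 1) ω)) hω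
    refine h1.trans_le ?_
    filter_upwards [hrec n] with ω hω
    have hb : (0 : ℝ) < 1 + β n ω := by linarith [hβnn n ω]
    have ha : (0 : ℝ) < A n ω := hApos n ω
    have ha1 : (0 : ℝ) < A (n + 1) ω := hApos (n + 1) ω
    have hmul := mul_le_mul_of_nonneg_left hω (inv_nonneg.mpr ha1.le)
    have hkey : (A (n + 1) ω)⁻¹ * ((1 + β n ω) * U n ω + ξ n ω - ρ n ω) +
        (Srho (n + 1) ω - Sxi (n + 1) ω) = X n ω := by
      have h2 : Srho (n + 1) ω = Srho n ω + ρ n ω / A (n + 1) ω := by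
        simp [hSrho_def, Finset.sum_range_succ]
      have h3 : Sxi (n + 1) ω = Sxi n ω + ξ n ω / A (n + 1) ω := by
        simp [hSxi_def, Finset.sum_range_succ]
      have h4 : A (n + 1) ω = A n ω * (1 + β n ω) := hAsucc n ω
      simp only [hX_def]
      rw [h2, h3, h4]
      field_simp
      ring
    calc (A (n + 1) ω)⁻¹ * (P[U (n + 1)|ℱ n]) ω + (Srho (n + 1) ω - Sxi (n + 1) ω)
        ≤ (A (n + 1) ω)⁻¹ * ((1 + β n ω) * U n ω + ξ n ω - ρ n ω) +
          (Srho (n + 1) ω - Sxi (n + 1) ω) := by linarith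
      _ = X n ω := hkey
  -- a lower bound for `X`
  have hsum_mono : ∀ ω, Monotone fun n => ∑ k ∈ Finset.range n, ξ k ω := by
    intro ω
    apply monotone_nat_of_le_succ
    intro n
    rw [Finset.sum_range_succ]
    linarith [hξnn n ω]
  have hXlb : ∀ n ω, -(∑ k ∈ Finset.range n, ξ k ω) ≤ X n ω := by
    intro n ω
    have h1 : 0 ≤ U n ω / A n ω := div_nonneg (hUnn n ω) (hApos n ω).le
    have h2 : 0 ≤ Srho n ω :=
      Finset.sum_nonneg fun j _ => div_nonneg (hρnn j ω) (hApos _ ω).le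
    have h3 : Sxi n ω ≤ ∑ k ∈ Finset.range n, ξ k ω :=
      Finset.sum_le_sum fun j _ => div_le_self (hξnn j ω) (hA1 _ ω)
    simp only [hX_def]
    linarith
  -- main step : for every `M`, a.e. on `{∀ n, ∑_{k<n} ξ_k ≤ M}`, `X` converges.
  have main : ∀ M : ℕ, ∀ᵐ ω ∂P, (∀ n, (∑ k ∈ Finset.range n, ξ k ω) ≤ (M : ℝ)) →
      ∃ c, Tendsto (fun n => X n ω) atTop (nhds c) := by
    intro M
    set e : ℕ → Ω → ℝ :=
      fun j ω => if (∑ k ∈ Finset.range (j + 1), ξ k ω) ≤ (M : ℝ) then 1 else 0 with he_def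
    have hemeas : ∀ j, Measurable[ℱ j] (e j) := by
      intro j
      have hs : MeasurableSet[ℱ j] {ω | (∑ k ∈ Finset.range (j + 1), ξ k ω) ≤ (M : ℝ)} := by
        apply measurableSet_le
        · exact Finset.measurable_sum _ fun k hk =>
            ((hξmeas k).mono (ℱ.mono (Nat.lt_succ_iff.mp (Finset.mem_range.mp hk)))).measurable
        · exact measurable_const
      exact Measurable.ite hs measurable_const measurable_const
    have he01 : ∀ j ω, e j ω = 0 ∨ e j ω = 1 := by
      intro j ω
      simp only [he_def]
      split <;> simp
    have henn : ∀ j ω, 0 ≤ e j ω := by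
      intro j ω; rcases he01 j ω with h | h <;> rw [h] <;> norm_num
    have hebd : ∀ j, ∃ C, ∀ ω, ‖e j ω‖ ≤ C := by
      intro j
      refine ⟨1, fun ω => ?_⟩
      rcases he01 j ω with h | h <;> rw [h] <;> norm_num
    set Y : ℕ → Ω → ℝ :=
      fun n ω => X 0 ω + ∑ j ∈ Finset.range n, e j ω * (X (j + 1) ω - X j ω) with hY_def
    have hYX : ∀ ω n, (∀ j, j < n → e j ω = 1) → Y n ω = X n ω := by
      intro ω n h
      have h1 : ∑ j ∈ Finset.range n, e j ω * (X (j + 1) ω - X j ω) =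
          ∑ j ∈ Finset.range n, (X (j + 1) ω - X j ω) :=
        Finset.sum_congr rfl fun j hj => by rw [h j (Finset.mem_range.mp hj), one_mul]
      simp only [hY_def]
      rw [h1, Finset.sum_range_sub fun j => X j ω]
      ring
    -- lower bound for the stopped process
    have hYlb : ∀ n ω, -(M : ℝ) ≤ Y n ω := by
      intro n ω
      induction n with
      | zero =>
        have h1 := hXlb 0 ω
        have h2 : Y 0 ω = X 0 ω := hYX ω 0 fun j hj => absurd hj (Nat.not_lt_zero j)
        have h3 : (0 : ℝ) ≤ M := Nat.cast_nonneg M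
        simp only [Finset.range_zero, Finset.sum_empty, neg_zero] at h1
        rw [h2]; linarith
      | succ n ih =>
        by_cases h : (∑ k ∈ Finset.range (n + 1), ξ k ω) ≤ (M : ℝ)
        · have hall : ∀ j, j < n + 1 → e j ω = 1 := by
            intro j hj
            have hle : (∑ k ∈ Finset.range (j + 1), ξ k ω) ≤ (M : ℝ) :=
              le_trans (hsum_mono ω (by omega : j + 1 ≤ n + 1)) h
            simp only [he_def]; rw [if_pos hle]
          rw [hYX ω (n + 1) hall]
          have h1 := hXlb (n + 1) ω
          linarith
        · have h0 : e n ω = 0 := by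
            simp only [he_def]; rw [if_neg h]
          have h1 : Y (n + 1) ω = Y n ω := by
            simp only [hY_def, Finset.sum_range_succ, h0, zero_mul, add_zero]
          rw [h1]; exact ih
    -- integrability and measurability of `Y`
    have hYint : ∀ n, Integrable (Y n) P := by
      intro n
      refine (hXint 0).add (integrable_finset_sum _ fun j hj => ?_)
      refine ((hXint (j + 1)).sub (hXint j)).bdd_mul
        (((hemeas j).mono (ℱ.le j) le_rfl).aestronglyMeasurable) (ae_of_all _ (hebd j).choose_spec)
    have hYmeas : ∀ n, StronglyMeasurable[ℱ n] (Y n) := by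
      intro n
      refine ((hXmeas 0).mono (ℱ.mono (Nat.zero_le n))).add ?_
      apply Finset.stronglyMeasurable_fun_sum
      intro j hj
      have hjn : j + 1 ≤ n := Finset.mem_range.mp hj
      have h1 : StronglyMeasurable[ℱ n] (e j) :=
        ((hemeas j).mono (ℱ.mono (by omega : j ≤ n)) le_rfl).stronglyMeasurable
      exact h1.mul (((hXmeas (j + 1)).mono (ℱ.mono hjn)).sub
        ((hXmeas j).mono (ℱ.mono (by omega : j ≤ n))))
    -- the supermartingale property of `Y`
    have hYsuper : ∀ n, P[Y (n + 1)|ℱ n] ≤ᵐ[P] Y n := by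
      intro n
      have hint2 : Integrable (e n * X (n + 1)) P :=
        (hXint (n + 1)).bdd_mul (((hemeas n).mono (ℱ.le n) le_rfl).aestronglyMeasurable) (ae_of_all _ (hebd n).choose_spec)
      have hint1 : Integrable (fun ω => Y n ω - e n ω * X n ω) P :=
        (hYint n).sub ((hXint n).bdd_mul
          (((hemeas n).mono (ℱ.le n) le_rfl).aestronglyMeasurable) (ae_of_all _ (hebd n).choose_spec))
      have hsplit : Y (n + 1) = (fun ω => Y n ω - e n ω * X n ω) + e n * X (n + 1) := by
        funext ω
        simp only [hY_def, Finset.sum_range_succ, Pi.add_apply, Pi.mul_apply]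
        ring
      have h1 : P[Y (n + 1)|ℱ n] =ᵐ[P]
          fun ω => (Y n ω - e n ω * X n ω) + e n ω * (P[X (n + 1)|ℱ n]) ω := by
        rw [hsplit]
        refine (condExp_add hint1 hint2 _).trans ?_
        have h2 : P[(fun ω => Y n ω - e n ω * X n ω)|ℱ n] =
            fun ω => Y n ω - e n ω * X n ω :=
          condExp_of_stronglyMeasurable (ℱ.le n)
            ((hYmeas n).sub (((hemeas n).stronglyMeasurable).mul (hXmeas n))) hint1
        have h3 := condExp_mul_of_stronglyMeasurable_left ((hemeas n).stronglyMeasurable)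
          hint2 (hXint (n + 1))
        rw [h2]
        filter_upwards [h3] with ω hω
        simp only [Pi.add_apply, Pi.mul_apply] at hω ⊢
        rw [hω]
      refine h1.trans_le ?_
      filter_upwards [hXsuper n] with ω hω
      have := mul_le_mul_of_nonneg_left hω (henn n ω)
      linarith
    -- expectations of `Y` are bounded
    have hEY : ∀ n, ∫ ω, Y n ω ∂P ≤ ∫ ω, Y 0 ω ∂P := by
      intro n
      induction n with
      | zero => exact le_rfl
      | succ n ih =>
        have h1 : ∫ ω, Y (n + 1) ω ∂P = ∫ ω, (P[Y (n + 1)|ℱ n]) ω ∂P :=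
          (integral_condExp (ℱ.le n)).symm
        rw [h1]
        exact le_trans (integral_mono_ae integrable_condExp (hYint n) (hYsuper n)) ih
    -- the negated process is an L¹-bounded submartingale
    set Z : ℕ → Ω → ℝ := fun n ω => -(Y n ω) with hZ_def
    have hZint : ∀ n, Integrable (Z n) P := fun n => (hYint n).neg
    have hZsub : Submartingale Z ℱ P := by
      refine submartingale_nat (fun n => (hYmeas n).neg) hZint fun i => ?_
      have h1 : P[Z (i + 1)|ℱ i] =ᵐ[P] fun ω => -(P[Y (i + 1)|ℱ i]) ω := by
        have := condExp_neg (μ := P) (m := ℱ i) (Y (i + 1))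
        exact this
      filter_upwards [h1, hYsuper i] with ω hω1 hω2
      simp only [hZ_def]
      rw [hω1]
      linarith
    set R : NNReal := ((∫ ω, Y 0 ω ∂P) + 2 * M).toNNReal with hR_def
    have hbdd : ∀ n, eLpNorm (Z n) 1 P ≤ (R : ENNReal) := by
      intro n
      have habs : ∀ ω, ‖Z n ω‖ ≤ Y n ω + 2 * M := by
        intro ω
        have h1 := hYlb n ω
        simp only [hZ_def, norm_neg, Real.norm_eq_abs]
        rcases abs_cases (Y n ω) with ⟨h2, _⟩ | ⟨h2, _⟩ <;>
          · rw [h2]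
            have : (0 : ℝ) ≤ M := Nat.cast_nonneg M
            linarith
      have hintle : ∫ ω, ‖Z n ω‖ ∂P ≤ (∫ ω, Y 0 ω ∂P) + 2 * M := by
        calc ∫ ω, ‖Z n ω‖ ∂P ≤ ∫ ω, (Y n ω + 2 * M) ∂P :=
              integral_mono (hZint n).norm ((hYint n).add (integrable_const _))
                habs
          _ = (∫ ω, Y n ω ∂P) + 2 * M := by
              rw [integral_add (hYint n) (integrable_const _), integral_const]
              simp
          _ ≤ (∫ ω, Y 0 ω ∂P) + 2 * M := by linarith [hEY n]
      have h2 : eLpNorm (Z n) 1 P = ENNReal.ofReal (∫ ω, ‖Z n ω‖ ∂P) := by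
        rw [eLpNorm_one_eq_lintegral_enorm,
          ← ofReal_integral_norm_eq_lintegral_enorm (hZint n)]
      rw [h2]
      exact ENNReal.ofReal_le_ofReal hintle
    have hconv := hZsub.exists_ae_tendsto_of_bdd hbdd
    filter_upwards [hconv] with ω hω hsum
    obtain ⟨l, hl⟩ := hω
    have hYeq : ∀ n, Y n ω = X n ω := by
      intro n
      refine hYX ω n fun j hj => ?_
      simp [he_def, hsum (j + 1)]
    refine ⟨-l, ?_⟩
    have h1 : Tendsto (fun n => -(Z n ω)) atTop (nhds (-l)) := hl.neg
    exact h1.congr fun n => by simp only [hZ_def, neg_neg]; exact hYeq n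
  -- put the `M`'s together and do the pointwise analysis
  have hae : ∀ᵐ ω ∂P, ∀ M : ℕ, (∀ n, (∑ k ∈ Finset.range n, ξ k ω) ≤ (M : ℝ)) →
      ∃ c, Tendsto (fun n => X n ω) atTop (nhds c) := (ae_all_iff).mpr main
  filter_upwards [hae] with ω hω
  rintro ⟨hβs, hξs⟩
  obtain ⟨M, hM⟩ := exists_nat_ge (∑' i, ξ i ω)
  have hpart : ∀ n, (∑ k ∈ Finset.range n, ξ k ω) ≤ (M : ℝ) := fun n =>
    le_trans (Summable.sum_le_tsum _ (fun k _ => hξnn k ω) hξs) hM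
  obtain ⟨L, hL⟩ := hω M hpart
  -- `A` converges
  have hAub : ∀ n, A n ω ≤ Real.exp (∑' j, β j ω) := by
    intro n
    calc A n ω ≤ ∏ j ∈ Finset.range n, Real.exp (β j ω) := by
          apply Finset.prod_le_prod
          · intro j _; linarith [hβnn j ω]
          · intro j _; linarith [Real.add_one_le_exp (β j ω)]
      _ = Real.exp (∑ j ∈ Finset.range n, β j ω) := (Real.exp_sum _ _).symm
      _ ≤ _ := Real.exp_le_exp.mpr (Summable.sum_le_tsum _ (fun k _ => hβnn k ω) hβs)
  have hAbdd : BddAbove (Set.range fun n => A n ω) := by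
    refine ⟨Real.exp (∑' j, β j ω), ?_⟩
    rintro x ⟨n, rfl⟩
    exact hAub n
  have hAtend : Tendsto (fun n => A n ω) atTop (nhds (⨆ n, A n ω)) :=
    tendsto_atTop_ciSup (hAmono ω) hAbdd
  have hAle : ∀ n, A n ω ≤ ⨆ n, A n ω := fun n => le_ciSup hAbdd n
  have hAinf1 : (1 : ℝ) ≤ ⨆ n, A n ω := le_trans (hA1 0 ω) (hAle 0)
  -- `Sxi` converges
  have hSximono : Monotone fun n => Sxi n ω := by
    apply monotone_nat_of_le_succ
    intro n
    have h1 : Sxi (n + 1) ω = Sxi n ω + ξ n ω / A (n + 1) ω := by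
      simp [hSxi_def, Finset.sum_range_succ]
    rw [h1]
    have : 0 ≤ ξ n ω / A (n + 1) ω := div_nonneg (hξnn n ω) (hApos _ ω).le
    linarith
  have hSxiub : ∀ n, Sxi n ω ≤ (M : ℝ) := fun n =>
    le_trans (Finset.sum_le_sum fun j _ => div_le_self (hξnn j ω) (hA1 _ ω)) (hpart n)
  have hSxibdd : BddAbove (Set.range fun n => Sxi n ω) := by
    refine ⟨(M : ℝ), ?_⟩; rintro x ⟨n, rfl⟩; exact hSxiub n
  have hSxitend : Tendsto (fun n => Sxi n ω) atTop (nhds (⨆ n, Sxi n ω)) :=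
    tendsto_atTop_ciSup hSximono hSxibdd
  -- `Srho` converges
  have hSrhomono : Monotone fun n => Srho n ω := by
    apply monotone_nat_of_le_succ
    intro n
    have h1 : Srho (n + 1) ω = Srho n ω + ρ n ω / A (n + 1) ω := by
      simp [hSrho_def, Finset.sum_range_succ]
    rw [h1]
    have : 0 ≤ ρ n ω / A (n + 1) ω := div_nonneg (hρnn n ω) (hApos _ ω).le
    linarith
  have hWtend : Tendsto (fun n => X n ω + Sxi n ω) atTop (nhds (L + ⨆ n, Sxi n ω)) :=
    hL.add hSxitend
  have hSrhobdd : BddAbove (Set.range fun n => Srho n ω) := by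
    obtain ⟨C, hC⟩ := hWtend.bddAbove_range
    refine ⟨C, ?_⟩
    rintro x ⟨n, rfl⟩
    have h1 : 0 ≤ U n ω / A n ω := div_nonneg (hUnn n ω) (hApos n ω).le
    have h2 : Srho n ω ≤ X n ω + Sxi n ω := by simp only [hX_def]; linarith
    exact le_trans h2 (hC ⟨n, rfl⟩)
  have hSrhotend : Tendsto (fun n => Srho n ω) atTop (nhds (⨆ n, Srho n ω)) :=
    tendsto_atTop_ciSup hSrhomono hSrhobdd
  have hSrhole : ∀ n, Srho n ω ≤ ⨆ n, Srho n ω := fun n => le_ciSup hSrhobdd n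
  -- `U n / A n` converges, hence `U n` converges
  have hUA : Tendsto (fun n => U n ω / A n ω) atTop
      (nhds ((L + ⨆ n, Sxi n ω) - ⨆ n, Srho n ω)) := by
    refine (hWtend.sub hSrhotend).congr fun n => ?_
    simp only [hX_def]
    ring
  have hUconv : Tendsto (fun n => U n ω) atTop
      (nhds (((L + ⨆ n, Sxi n ω) - ⨆ n, Srho n ω) * ⨆ n, A n ω)) := by
    refine (hUA.mul hAtend).congr fun n => ?_
    exact div_mul_cancel₀ _ (ne_of_gt (hApos n ω))
  constructor
  · exact ⟨_, hUconv⟩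
  · apply summable_of_sum_range_le (fun n => hρnn n ω)
    intro n
    calc ∑ j ∈ Finset.range n, ρ j ω
        ≤ ∑ j ∈ Finset.range n, (ρ j ω / A (j + 1) ω) * ⨆ n, A n ω := by
          apply Finset.sum_le_sum
          intro j _
          calc ρ j ω = (ρ j ω / A (j + 1) ω) * A (j + 1) ω :=
                (div_mul_cancel₀ _ (ne_of_gt (hApos _ ω))).symm
            _ ≤ _ := mul_le_mul_of_nonneg_left (hAle (j + 1))
                (div_nonneg (hρnn j ω) (hApos _ ω).le)
      _ = Srho n ω * ⨆ n, A n ω := by rw [← Finset.sum_mul]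
      _ ≤ (⨆ n, Srho n ω) * ⨆ n, A n ω :=
          mul_le_mul_of_nonneg_right (hSrhole n) (by linarith)
end
end

section
/- (ATE-SG, partial-gradient convergence) Let ℓ : ℝ^{p0} × ℝ^{pts} → ℝ be differentiable, bounded below by ℓ_low, and satisfy the block-Lipschitz conditions ‖∇_{w0}ℓ(w0+d0, wts) − ∇_{w0}ℓ(w0, wts)‖ ≤ L0‖d0‖ and ‖∇_{wts}ℓ(w0, wts+dts) − ∇_{wts}ℓ(w0, wts)‖ ≤ Lts‖dts‖. Let ℕ = I0 ∪ Its be a partition of the iteration indices into two disjoint infinite sets. On a filtered probability space (Ω, 𝒜, (𝒜_i), P), let w^{(i)} be 𝒜_i-measurable iterates generated as follows: for i ∈ I0, w^{(i+1)} = (w0^{(i)} − η_i g_i, wts^{(i)}) where g_i : Ω → ℝ^{p0} satisfies E[g_i | 𝒜_i] = ∇_{w0}ℓ(w^{(i)}) and E[‖g_i‖² | 𝒜_i] ≤ M2‖∇_{w0}ℓ(w^{(i)})‖² + M1 a.s.; for i ∈ Its, w^{(i+1)} = (w0^{(i)}, wts^{(i)} − η_i g_i) where g_i : Ω → ℝ^{pts}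 satisfies E[g_i | 𝒜_i] = ∇_{wts}ℓ(w^{(i)}) and E[‖g_i‖² | 𝒜_i] ≤ M2‖∇_{wts}ℓ(w^{(i)})‖² + M1 a.s. Suppose the deterministic learning rates (η_i) are non-increasing along I0 and along Its, satisfy Σ_{i∈I0} η_i = ∞, Σ_{i∈Its} η_i = ∞, Σ_{i=0}^∞ η_i² < ∞, and are small enough that 1 − (L0/2) η_i M2 ≥ c for i ∈ I0 and 1 − (Lts/2) η_i M2 ≥ c for i ∈ Its, for some c ∈ (0,1). Then liminf_{i∈I0} ‖∇_{w0}ℓ(w^{(i)})‖² = 0 and liminf_{i∈Its} ‖∇_{wts}ℓ(w^{(i)})‖² = 0, almost surely. -/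
open MeasureTheory Filter RealInnerProductSpace

noncomputable section

abbrev Euc (n : ℕ) : Type := EuclideanSpace ℝ (Fin n)

noncomputable def grad0 {p0 pts : ℕ} (ℓ : Euc p0 × Euc pts → ℝ)
    (w : Euc p0 × Euc pts) : Euc p0 :=
  gradient (fun u => ℓ (u, w.2)) w.1

noncomputable def gradTs {p0 pts : ℕ} (ℓ : Euc p0 × Euc pts → ℝ)
    (w : Euc p0 × Euc pts) : Euc pts :=
  gradient (fun v => ℓ (w.1, v)) w.2

lemma descent_lemma {p : ℕ} (F : Euc p → ℝ) (hF : Differentiable ℝ F)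
    (L : ℝ) (hL : 0 ≤ L)
    (hlip : ∀ x y : Euc p, ‖gradient F (x + y) - gradient F x‖ ≤ L * ‖y‖)
    (x d : Euc p) :
    F (x + d) ≤ F x + ⟪gradient F x, d⟫ + L / 2 * ‖d‖ ^ 2 := by
  have hderiv : ∀ t : ℝ, HasDerivAt (fun t : ℝ => F (x + t • d))
      ⟪gradient F (x + t • d), d⟫ t := by
    intro t
    have h1 : HasDerivAt (fun t : ℝ => x + t • d) d t := by
      simpa using ((hasDerivAt_id t).smul_const d).const_add x
    have h2 := ((hF (x + t • d)).hasGradientAt).hasFDerivAt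
    have h3 := h2.comp_hasDerivAt t h1
    rw [InnerProductSpace.toDual_apply_apply] at h3
    exact h3
  set ψ : ℝ → ℝ := fun t => F (x + t • d) - t * ⟪gradient F x, d⟫
      - L * ‖d‖ ^ 2 * (t ^ 2 / 2) with hψdef
  have hψ : ∀ t : ℝ, HasDerivAt ψ
      (⟪gradient F (x + t • d), d⟫ - ⟪gradient F x, d⟫ - L * ‖d‖ ^ 2 * t) t := by
    intro t
    have ha := (hderiv t).sub ((hasDerivAt_id t).mul_const ⟪gradient F x, d⟫)
    have hb : HasDerivAt (fun t : ℝ => L * ‖d‖ ^ 2 * (t ^ 2 / 2)) (L * ‖d‖ ^ 2 * t) t := by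
      have := ((hasDerivAt_pow 2 t).div_const 2).const_mul (L * ‖d‖ ^ 2)
      have e : ((2:ℕ):ℝ) * t ^ (2 - 1) / 2 = t := by norm_num
      rw [e] at this
      exact this
    have h5 := ha.sub hb
    rw [one_mul] at h5
    exact h5
  have hmono : AntitoneOn ψ (Set.Icc (0 : ℝ) 1) := by
    refine antitoneOn_of_deriv_nonpos (convex_Icc 0 1) ?_ ?_ ?_
    · exact (Differentiable.continuous fun t => (hψ t).differentiableAt).continuousOn
    · exact Differentiable.differentiableOn (fun t => (hψ t).differentiableAt)
    · intro t ht
      rw [interior_Icc] at ht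
      rw [(hψ t).deriv]
      have h1 : ⟪gradient F (x + t • d) - gradient F x, d⟫ ≤ L * t * ‖d‖ ^ 2 := by
        calc ⟪gradient F (x + t • d) - gradient F x, d⟫
            ≤ ‖gradient F (x + t • d) - gradient F x‖ * ‖d‖ := real_inner_le_norm _ _
          _ ≤ L * ‖t • d‖ * ‖d‖ := by
              have := hlip x (t • d)
              nlinarith [norm_nonneg d]
          _ = L * t * ‖d‖ ^ 2 := by
              rw [norm_smul, Real.norm_eq_abs, abs_of_pos ht.1]; ring
      rw [inner_sub_left] at h1
      linarith
  have h01 : ψ 1 ≤ ψ 0 := hmono (by norm_num) (by norm_num) (by norm_num)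
  have e1 : ψ 1 = F (x + d) - ⟪gradient F x, d⟫ - L * ‖d‖ ^ 2 / 2 := by
    simp [hψdef]; ring
  have e0 : ψ 0 = F x := by simp [hψdef]
  rw [e1, e0] at h01
  nlinarith [sq_nonneg ‖d‖]

lemma condexp_L2_props {Ω : Type} {m m0 : MeasurableSpace Ω} (hm : m ≤ m0)
    (P : Measure Ω) [IsFiniteMeasure P] {E : Type} [NormedAddCommGroup E]
    [InnerProductSpace ℝ E] [CompleteSpace E]
    (g : Ω → E) (hgmem : MemLp g 2 P) :
    ∃ h : Ω → E, MemLp h 2 P ∧ (P[g|m]) =ᵐ[P] h ∧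
      Integrable (fun ω => ⟪h ω, g ω⟫) P ∧
      ∫ ω, ⟪h ω, g ω⟫ ∂P = ∫ ω, ‖h ω‖ ^ 2 ∂P := by
  haveI : SigmaFinite (P.trim hm) := by infer_instance
  set G : Lp E 2 P := hgmem.toLp g with hGdef
  have hGg : (G : Ω → E) =ᵐ[P] g := hgmem.coeFn_toLp
  set H : Lp E 2 P := (condExpL2 E ℝ hm G : Lp E 2 P) with hHdef
  have hHmem : MemLp (H : Ω → E) 2 P := Lp.memLp H
  have hinner_int : Integrable (fun ω => ⟪(H : Ω → E) ω, (G : Ω → E) ω⟫) P :=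
    L2.integrable_inner (𝕜 := ℝ) H G
  refine ⟨H, hHmem, ?_, ?_, ?_⟩
  · refine (ae_eq_condExp_of_forall_setIntegral_eq hm (hgmem.integrable one_le_two)
      (fun s hs hμs => integrableOn_condExpL2_of_measure_ne_top hm hμs.ne G)
      (fun s hs hμs => ?_) (aestronglyMeasurable_condExpL2 hm G)).symm
    rw [integral_condExpL2_eq hm G hs hμs.ne]
    exact setIntegral_congr_ae (hm s hs) (hGg.mono fun x hx _ => hx)
  · exact hinner_int.congr (hGg.mono fun ω hω => by dsimp only; rw [hω])
  · have h1 : ∫ ω, ⟪(H : Ω → E) ω, g ω⟫ ∂P = ∫ ω, ⟪(H : Ω → E) ω, (G : Ω → E) ω⟫ ∂P :=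
      integral_congr_ae (hGg.mono fun ω hω => by dsimp only; rw [hω])
    have h2 : ∫ ω, ⟪(H : Ω → E) ω, (G : Ω → E) ω⟫ ∂P = ⟪H, G⟫ :=
      (L2.inner_def H G).symm
    have h3 : ⟪H, G⟫ = ⟪H, H⟫ := by
      haveI : Fact (m ≤ m0) := ⟨hm⟩
      have horth : ⟪G - (condExpL2 E ℝ hm G : Lp E 2 P),
          ((condExpL2 E ℝ hm G : lpMeas E ℝ m 2 P) : Lp E 2 P)⟫ = 0 := by
        rw [condExpL2]
        exact Submodule.starProjection_inner_eq_zero G _ (condExpL2 E ℝ hm G).2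
      rw [inner_sub_left] at horth
      rw [hHdef, real_inner_comm]
      linarith [horth]
    have h4 : ⟪H, H⟫ = ∫ ω, ⟪(H : Ω → E) ω, (H : Ω → E) ω⟫ ∂P := L2.inner_def H H
    have h5 : ∫ ω, ⟪(H : Ω → E) ω, (H : Ω → E) ω⟫ ∂P = ∫ ω, ‖(H : Ω → E) ω‖ ^ 2 ∂P :=
      integral_congr_ae (Eventually.of_forall fun ω => real_inner_self_eq_norm_sq _)
    rw [h1, h2, h3, h4, h5]

lemma step_expectation {Ω : Type} {m m0 : MeasurableSpace Ω} (hm : m ≤ m0)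
    (P : Measure Ω) [IsProbabilityMeasure P] {E : Type} [NormedAddCommGroup E]
    [InnerProductSpace ℝ E] [CompleteSpace E]
    (a g : Ω → E) (X Y : Ω → ℝ)
    (η L M1 M2 c : ℝ) (hη : 0 < η) (hL : 0 < L) (hM1 : 0 < M1) (hM2 : 0 < M2) (hc : 0 < c)
    (hsmall : c ≤ 1 - L / 2 * η * M2)
    (hgint : Integrable g P) (hgsq : Integrable (fun ω => ‖g ω‖ ^ 2) P)
    (hmean : (P[g|m]) =ᵐ[P] a)
    (hsecond : (P[(fun ω => ‖g ω‖ ^ 2)|m]) ≤ᵐ[P] fun ω => M2 * ‖a ω‖ ^ 2 + M1)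
    (hX : Integrable X P) (hY : Integrable Y P)
    (hdesc : ∀ᵐ ω ∂P, Y ω ≤ X ω - η * ⟪a ω, g ω⟫ + L / 2 * η ^ 2 * ‖g ω‖ ^ 2) :
    Integrable (fun ω => ‖a ω‖ ^ 2) P ∧ 0 ≤ ∫ ω, ‖a ω‖ ^ 2 ∂P ∧
      c * (η * ∫ ω, ‖a ω‖ ^ 2 ∂P) ≤ (∫ ω, X ω ∂P) - (∫ ω, Y ω ∂P) + L / 2 * M1 * η ^ 2 := by
  haveI : SigmaFinite (P.trim hm) := by infer_instance
  have hgmem : MemLp g 2 P :=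
    (memLp_two_iff_integrable_sq_norm hgint.aestronglyMeasurable).2 hgsq
  obtain ⟨h, hhmem, hcondeq, hinner_int_h, hinner_eq_h⟩ := condexp_L2_props hm P g hgmem
  have hah : a =ᵐ[P] h := hmean.symm.trans hcondeq
  have hhsq : Integrable (fun ω => ‖h ω‖ ^ 2) P :=
    (memLp_two_iff_integrable_sq_norm hhmem.aestronglyMeasurable).1 hhmem
  have hasq : Integrable (fun ω => ‖a ω‖ ^ 2) P :=
    hhsq.congr (hah.mono fun ω hω => by dsimp only; rw [hω])
  have hinner_int : Integrable (fun ω => ⟪a ω, g ω⟫) P :=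
    hinner_int_h.congr (hah.mono fun ω hω => by dsimp only; rw [hω])
  have hinner_eq : ∫ ω, ⟪a ω, g ω⟫ ∂P = ∫ ω, ‖a ω‖ ^ 2 ∂P := by
    have e1 : ∫ ω, ⟪a ω, g ω⟫ ∂P = ∫ ω, ⟪h ω, g ω⟫ ∂P :=
      integral_congr_ae (hah.mono fun ω hω => by dsimp only; rw [hω])
    have e2 : ∫ ω, ‖a ω‖ ^ 2 ∂P = ∫ ω, ‖h ω‖ ^ 2 ∂P :=
      integral_congr_ae (hah.mono fun ω hω => by dsimp only; rw [hω])
    rw [e1, e2, hinner_eq_h]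
  have hanonneg : 0 ≤ ∫ ω, ‖a ω‖ ^ 2 ∂P := integral_nonneg fun ω => by positivity
  refine ⟨hasq, hanonneg, ?_⟩
  -- second moment bound in expectation
  have hsecond_int : ∫ ω, ‖g ω‖ ^ 2 ∂P ≤ M2 * (∫ ω, ‖a ω‖ ^ 2 ∂P) + M1 := by
    have e0 : ∫ ω, ‖g ω‖ ^ 2 ∂P = ∫ ω, (P[(fun ω => ‖g ω‖ ^ 2)|m]) ω ∂P :=
      (integral_condExp hm).symm
    have e1 : ∫ ω, (P[(fun ω => ‖g ω‖ ^ 2)|m]) ω ∂P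
        ≤ ∫ ω, (M2 * ‖a ω‖ ^ 2 + M1) ∂P :=
      integral_mono_ae integrable_condExp ((hasq.const_mul M2).add (integrable_const M1)) hsecond
    have e2 : ∫ ω, (M2 * ‖a ω‖ ^ 2 + M1) ∂P = M2 * (∫ ω, ‖a ω‖ ^ 2 ∂P) + M1 := by
      rw [integral_add (hasq.const_mul M2) (integrable_const M1), integral_const_mul,
        integral_const, probReal_univ]
      simp
    rw [e0]; rw [e2] at e1; exact e1
  have hmain : ∫ ω, Y ω ∂P ≤ (∫ ω, X ω ∂P) - η * (∫ ω, ‖a ω‖ ^ 2 ∂P)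
      + L / 2 * η ^ 2 * ∫ ω, ‖g ω‖ ^ 2 ∂P := by
    have im : Integrable (fun ω => η * ⟪a ω, g ω⟫) P := hinner_int.const_mul η
    have i1 : Integrable (fun ω => X ω - η * ⟪a ω, g ω⟫) P := hX.sub im
    have i2 : Integrable (fun ω => L / 2 * η ^ 2 * ‖g ω‖ ^ 2) P :=
      hgsq.const_mul (L / 2 * η ^ 2)
    have e1 : ∫ ω, Y ω ∂P ≤ ∫ ω, (X ω - η * ⟪a ω, g ω⟫ + L / 2 * η ^ 2 * ‖g ω‖ ^ 2) ∂P :=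
      integral_mono_ae hY (i1.add i2) hdesc
    have e2 : ∫ ω, (X ω - η * ⟪a ω, g ω⟫ + L / 2 * η ^ 2 * ‖g ω‖ ^ 2) ∂P
        = (∫ ω, X ω ∂P) - η * (∫ ω, ⟪a ω, g ω⟫ ∂P) + L / 2 * η ^ 2 * ∫ ω, ‖g ω‖ ^ 2 ∂P := by
      rw [integral_add i1 i2, integral_sub hX im, integral_const_mul, integral_const_mul]
    rw [e2, hinner_eq] at e1
    exact e1
  have hgnonneg : 0 ≤ ∫ ω, ‖g ω‖ ^ 2 ∂P := integral_nonneg fun ω => by positivity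
  set A := ∫ ω, ‖a ω‖ ^ 2 ∂P
  nlinarith [mul_le_mul_of_nonneg_right hsecond_int (by positivity : (0:ℝ) ≤ L / 2 * η ^ 2),
    mul_le_mul_of_nonneg_right hsmall (mul_nonneg hη.le hanonneg)]

lemma liminf_zero_of_summable (S : Set ℕ) (η u : ℕ → ℝ) (hη : ∀ i, 0 < η i)
    (hu : ∀ i, 0 ≤ u i) (hdiv : ¬ Summable (S.indicator η))
    (hsum : Summable (S.indicator fun j => η j * u j)) :
    liminf u (atTop ⊓ Filter.principal S) = 0 := by
  have hkey : ∀ a : ℝ, 0 < a → ¬ (∀ᶠ i in atTop ⊓ Filter.principal S, a ≤ u i) := by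
    intro a ha hev
    rw [eventually_inf_principal, eventually_atTop] at hev
    obtain ⟨N, hN⟩ := hev
    apply hdiv
    rw [← summable_nat_add_iff N]
    have hv : Summable (fun i => (1 / a) * S.indicator (fun j => η j * u j) (i + N)) :=
      ((summable_nat_add_iff N).2 hsum).mul_left (1 / a)
    refine Summable.of_nonneg_of_le (fun i => ?_) (fun i => ?_) hv
    · exact Set.indicator_nonneg (fun j _ => (hη j).le) _
    · by_cases hmem : (i + N) ∈ S
      · rw [Set.indicator_of_mem hmem, Set.indicator_of_mem hmem, one_div_mul_eq_div,
          le_div_iff₀ ha]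
        have hau : a ≤ u (i + N) := hN (i + N) (Nat.le_add_left N i) hmem
        nlinarith [hη (i + N)]
      · rw [Set.indicator_of_notMem hmem, Set.indicator_of_notMem hmem]
        simp
  have h0mem : (0 : ℝ) ∈ {x : ℝ | ∀ᶠ i in atTop ⊓ Filter.principal S, x ≤ u i} := by
    simp only [Set.mem_setOf_eq]
    exact Eventually.of_forall fun i => hu i
  have hsub : {x : ℝ | ∀ᶠ i in atTop ⊓ Filter.principal S, x ≤ u i} ⊆ Set.Iic 0 := by
    intro x hx
    simp only [Set.mem_setOf_eq] at hx
    simp only [Set.mem_Iic]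
    by_contra hx0
    exact hkey x (not_le.1 hx0) hx
  rw [liminf_eq]
  refine le_antisymm (csSup_le ⟨0, h0mem⟩ fun x hx => hsub hx) (le_csSup ⟨0, fun x hx => hsub hx⟩ h0mem)

/-- ATE-SG, partial-gradient convergence: the iteration indices are
partitioned into two disjoint infinite sets `I0` (shared phase: only `w0` is updated) and
`Its` (task-specific phase: only `wts` is updated), with conditionally unbiased stochastic
partial-gradient estimators with bounded conditional second moments.  If the learning rates
are non-increasing along each phase, diverge in sum along each phase, are square-summable,
and are small enough that `1 - (L0/2)ηᵢM2 ≥ c` on `I0` and `1 - (Lts/2)ηᵢM2 ≥ c` on `Its`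
for some `c ∈ (0,1)`, then almost surely
`liminf_{i∈I0} ‖∇_{w0}ℓ(w⁽ⁱ⁾)‖² = 0` and `liminf_{i∈Its} ‖∇_{wts}ℓ(w⁽ⁱ⁾)‖² = 0`. -/
theorem ate_sg_partial_gradient_convergence {p0 pts : ℕ}
    (ℓ : Euc p0 × Euc pts → ℝ) (hdiff : Differentiable ℝ ℓ)
    (ℓlow : ℝ) (hlow : ∀ v, ℓlow ≤ ℓ v)
    (L0 Lts : ℝ) (hL0 : 0 < L0) (hLts : 0 < Lts)
    (hlip0 : ∀ (w0 d0 : Euc p0) (wts : Euc pts),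
      ‖grad0 ℓ (w0 + d0, wts) - grad0 ℓ (w0, wts)‖ ≤ L0 * ‖d0‖)
    (hlipts : ∀ (w0 : Euc p0) (wts dts : Euc pts),
      ‖gradTs ℓ (w0, wts + dts) - gradTs ℓ (w0, wts)‖ ≤ Lts * ‖dts‖)
    (M1 M2 : ℝ) (hM1 : 0 < M1) (hM2 : 0 < M2)
    (I0 Its : Set ℕ) (hunion : I0 ∪ Its = Set.univ) (hdisj : Disjoint I0 Its)
    (hI0inf : I0.Infinite) (hItsinf : Its.Infinite)
    {Ω : Type} {m0 : MeasurableSpace Ω} (P : Measure Ω) [IsProbabilityMeasure P]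
    (ℱ : Filtration ℕ m0)
    (w : ℕ → Ω → Euc p0 × Euc pts) (hw : ∀ i, StronglyMeasurable[ℱ i] (w i))
    (g0 : ℕ → Ω → Euc p0) (gts : ℕ → Ω → Euc pts)
    (η : ℕ → ℝ) (hηpos : ∀ i, 0 < η i)
    (hg0int : ∀ i ∈ I0, Integrable (g0 i) P)
    (hg0sq : ∀ i ∈ I0, Integrable (fun ω => ‖g0 i ω‖ ^ 2) P)
    (hg0mean : ∀ i ∈ I0, (P[g0 i|ℱ i]) =ᵐ[P] fun ω => grad0 ℓ (w i ω))
    (hg0second : ∀ i ∈ I0, (P[(fun ω => ‖g0 i ω‖ ^ 2)|ℱ i]) ≤ᵐ[P]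
      fun ω => M2 * ‖grad0 ℓ (w i ω)‖ ^ 2 + M1)
    (hrec0 : ∀ i ∈ I0, ∀ ω, w (i + 1) ω = ((w i ω).1 - η i • g0 i ω, (w i ω).2))
    (hgtsint : ∀ i ∈ Its, Integrable (gts i) P)
    (hgtssq : ∀ i ∈ Its, Integrable (fun ω => ‖gts i ω‖ ^ 2) P)
    (hgtsmean : ∀ i ∈ Its, (P[gts i|ℱ i]) =ᵐ[P] fun ω => gradTs ℓ (w i ω))
    (hgtssecond : ∀ i ∈ Its, (P[(fun ω => ‖gts i ω‖ ^ 2)|ℱ i]) ≤ᵐ[P]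
      fun ω => M2 * ‖gradTs ℓ (w i ω)‖ ^ 2 + M1)
    (hrects : ∀ i ∈ Its, ∀ ω, w (i + 1) ω = ((w i ω).1, (w i ω).2 - η i • gts i ω))
    (hlint : ∀ i, Integrable (fun ω => ℓ (w i ω)) P)
    (hmono0 : ∀ i ∈ I0, ∀ j ∈ I0, i ≤ j → η j ≤ η i)
    (hmonots : ∀ i ∈ Its, ∀ j ∈ Its, i ≤ j → η j ≤ η i)
    (hdiv0 : ¬ Summable (I0.indicator η))
    (hdivts : ¬ Summable (Its.indicator η))
    (hsumsq : Summable (fun i => η i ^ 2))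
    (c : ℝ) (hc : c ∈ Set.Ioo (0 : ℝ) 1)
    (hsmall0 : ∀ i ∈ I0, c ≤ 1 - L0 / 2 * η i * M2)
    (hsmallts : ∀ i ∈ Its, c ≤ 1 - Lts / 2 * η i * M2) :
    ∀ᵐ ω ∂P,
      liminf (fun i => ‖grad0 ℓ (w i ω)‖ ^ 2) (atTop ⊓ Filter.principal I0) = 0 ∧
        liminf (fun i => ‖gradTs ℓ (w i ω)‖ ^ 2) (atTop ⊓ Filter.principal Its) = 0 := by
  classical
  obtain ⟨hc0, hc1⟩ := hc
  have hmemts : ∀ i, i ∉ I0 → i ∈ Its := by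
    intro i hi
    have h := Set.mem_univ i
    rw [← hunion] at h
    rcases h with h | h
    · exact absurd h hi
    · exact h
  set f : ℕ → Ω → ℝ := fun i ω =>
    if i ∈ I0 then ‖grad0 ℓ (w i ω)‖ ^ 2 else ‖gradTs ℓ (w i ω)‖ ^ 2 with hf
  have key : ∀ i, Integrable (f i) P ∧ 0 ≤ ∫ ω, f i ω ∂P ∧
      c * (η i * ∫ ω, f i ω ∂P) ≤ (∫ ω, ℓ (w i ω) ∂P) - (∫ ω, ℓ (w (i + 1) ω) ∂P)
        + max L0 Lts / 2 * M1 * η i ^ 2 := by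
    intro i
    by_cases hi : i ∈ I0
    · have hdesc : ∀ᵐ ω ∂P, ℓ (w (i + 1) ω) ≤ ℓ (w i ω)
          - η i * ⟪grad0 ℓ (w i ω), g0 i ω⟫ + L0 / 2 * η i ^ 2 * ‖g0 i ω‖ ^ 2 := by
        refine Eventually.of_forall fun ω => ?_
        have hF : Differentiable ℝ (fun u : Euc p0 => ℓ (u, (w i ω).2)) :=
          hdiff.comp (differentiable_id.prodMk (differentiable_const _))
        have hd := descent_lemma (fun u : Euc p0 => ℓ (u, (w i ω).2)) hF L0 hL0.le
          (fun x y => by exact hlip0 x y (w i ω).2) (w i ω).1 (-(η i • g0 i ω))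
        have hle : ℓ (w (i + 1) ω) ≤ ℓ (w i ω)
            + ⟪grad0 ℓ (w i ω), -(η i • g0 i ω)⟫ + L0 / 2 * ‖-(η i • g0 i ω)‖ ^ 2 := by
          rw [hrec0 i hi ω, sub_eq_add_neg]
          exact hd
        have e4 : ⟪grad0 ℓ (w i ω), -(η i • g0 i ω)⟫
            = -(η i * ⟪grad0 ℓ (w i ω), g0 i ω⟫) := by
          rw [inner_neg_right, real_inner_smul_right]
        have e5 : ‖-(η i • g0 i ω)‖ ^ 2 = η i ^ 2 * ‖g0 i ω‖ ^ 2 := by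
          rw [norm_neg, norm_smul, mul_pow, Real.norm_eq_abs, sq_abs]
        rw [e4, e5] at hle
        ring_nf at hle ⊢
        linarith
      have key_i := step_expectation (ℱ.le i) P (fun ω => grad0 ℓ (w i ω)) (g0 i)
        (fun ω => ℓ (w i ω)) (fun ω => ℓ (w (i + 1) ω)) (η i) L0 M1 M2 c (hηpos i) hL0 hM1 hM2
        hc0 (hsmall0 i hi) (hg0int i hi) (hg0sq i hi) (hg0mean i hi) (hg0second i hi)
        (hlint i) (hlint (i + 1)) hdesc
      have hfeq : f i = fun ω => ‖grad0 ℓ (w i ω)‖ ^ 2 := by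
        funext ω; simp only [hf, hi, if_true]
      rw [hfeq]
      refine ⟨key_i.1, key_i.2.1, ?_⟩
      have h6 := key_i.2.2
      beta_reduce at h6
      have h7 : L0 / 2 * M1 * η i ^ 2 ≤ max L0 Lts / 2 * M1 * η i ^ 2 := by
        have h := le_max_left L0 Lts
        nlinarith [mul_nonneg (mul_nonneg (sub_nonneg.2 h) hM1.le) (sq_nonneg (η i))]
      linarith
    · have hits : i ∈ Its := hmemts i hi
      have hdesc : ∀ᵐ ω ∂P, ℓ (w (i + 1) ω) ≤ ℓ (w i ω)
          - η i * ⟪gradTs ℓ (w i ω), gts i ω⟫ + Lts / 2 * η i ^ 2 * ‖gts i ω‖ ^ 2 := by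
        refine Eventually.of_forall fun ω => ?_
        have hF : Differentiable ℝ (fun v : Euc pts => ℓ ((w i ω).1, v)) :=
          hdiff.comp ((differentiable_const _).prodMk differentiable_id)
        have hd := descent_lemma (fun v : Euc pts => ℓ ((w i ω).1, v)) hF Lts hLts.le
          (fun x y => by exact hlipts (w i ω).1 x y) (w i ω).2 (-(η i • gts i ω))
        have hle : ℓ (w (i + 1) ω) ≤ ℓ (w i ω)
            + ⟪gradTs ℓ (w i ω), -(η i • gts i ω)⟫ + Lts / 2 * ‖-(η i • gts i ω)‖ ^ 2 := by
          rw [hrects i hits ω, sub_eq_add_neg]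
          exact hd
        have e4 : ⟪gradTs ℓ (w i ω), -(η i • gts i ω)⟫
            = -(η i * ⟪gradTs ℓ (w i ω), gts i ω⟫) := by
          rw [inner_neg_right, real_inner_smul_right]
        have e5 : ‖-(η i • gts i ω)‖ ^ 2 = η i ^ 2 * ‖gts i ω‖ ^ 2 := by
          rw [norm_neg, norm_smul, mul_pow, Real.norm_eq_abs, sq_abs]
        rw [e4, e5] at hle
        ring_nf at hle ⊢
        linarith
      have key_i := step_expectation (ℱ.le i) P (fun ω => gradTs ℓ (w i ω)) (gts i)
        (fun ω => ℓ (w i ω)) (fun ω => ℓ (w (i + 1) ω)) (η i) Lts M1 M2 c (hηpos i) hLts hM1 hM2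
        hc0 (hsmallts i hits) (hgtsint i hits) (hgtssq i hits) (hgtsmean i hits)
        (hgtssecond i hits) (hlint i) (hlint (i + 1)) hdesc
      have hfeq : f i = fun ω => ‖gradTs ℓ (w i ω)‖ ^ 2 := by
        funext ω; simp only [hf, hi, if_false]
      rw [hfeq]
      refine ⟨key_i.1, key_i.2.1, ?_⟩
      have h6 := key_i.2.2
      beta_reduce at h6
      have h7 : Lts / 2 * M1 * η i ^ 2 ≤ max L0 Lts / 2 * M1 * η i ^ 2 := by
        have h := le_max_right L0 Lts
        nlinarith [mul_nonneg (mul_nonneg (sub_nonneg.2 h) hM1.le) (sq_nonneg (η i))]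
      linarith
  -- summability of expected values
  have hA0 : ∀ i, 0 ≤ η i * ∫ ω, f i ω ∂P := fun i => mul_nonneg (hηpos i).le (key i).2.1
  have hlb : ∀ n, ℓlow ≤ ∫ ω, ℓ (w n ω) ∂P := by
    intro n
    have h1 : ∫ (_ : Ω), ℓlow ∂P = ℓlow := by simp
    rw [← h1]
    exact integral_mono (integrable_const _) (hlint n) fun ω => hlow _
  have hKM : 0 ≤ max L0 Lts / 2 * M1 :=
    mul_nonneg (div_nonneg (le_trans hL0.le (le_max_left _ _)) (by norm_num)) hM1.le
  have hpartial : ∀ n, ∑ i ∈ Finset.range n, η i * ∫ ω, f i ω ∂P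
      ≤ ((∫ ω, ℓ (w 0 ω) ∂P) - ℓlow + max L0 Lts / 2 * M1 * (∑' i, η i ^ 2)) / c := by
    intro n
    rw [le_div_iff₀ hc0]
    have h3 : ∑ i ∈ Finset.range n, c * (η i * ∫ ω, f i ω ∂P)
        ≤ ∑ i ∈ Finset.range n, (((∫ ω, ℓ (w i ω) ∂P) - ∫ ω, ℓ (w (i + 1) ω) ∂P)
          + max L0 Lts / 2 * M1 * η i ^ 2) :=
      Finset.sum_le_sum fun i _ => by linarith [(key i).2.2]
    rw [Finset.sum_add_distrib, Finset.sum_range_sub' (fun i => ∫ ω, ℓ (w i ω) ∂P)] at h3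
    have h4 : ∑ i ∈ Finset.range n, max L0 Lts / 2 * M1 * η i ^ 2
        ≤ max L0 Lts / 2 * M1 * ∑' i, η i ^ 2 := by
      rw [← Finset.mul_sum]
      exact mul_le_mul_of_nonneg_left (Summable.sum_le_tsum _ (fun i _ => sq_nonneg _) hsumsq) hKM
    have h5 := hlb n
    have h8 : (∑ i ∈ Finset.range n, η i * ∫ ω, f i ω ∂P) * c
        = ∑ i ∈ Finset.range n, c * (η i * ∫ ω, f i ω ∂P) := by
      rw [Finset.sum_mul]
      exact Finset.sum_congr rfl fun i _ => by ring
    rw [h8]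
    linarith
  have hsummable : Summable (fun i => η i * ∫ ω, f i ω ∂P) :=
    summable_of_sum_range_le hA0 hpartial
  -- Tonelli
  have hfnn : ∀ i ω, 0 ≤ f i ω := by
    intro i ω
    simp only [hf]
    split <;> positivity
  have haemeas : ∀ i, AEMeasurable (fun ω => ENNReal.ofReal (η i * f i ω)) P := fun i =>
    ENNReal.measurable_ofReal.comp_aemeasurable
      (((key i).1.aestronglyMeasurable.aemeasurable).const_mul (η i))
  have h1 : ∀ i, ∫⁻ ω, ENNReal.ofReal (η i * f i ω) ∂P
      = ENNReal.ofReal (η i * ∫ ω, f i ω ∂P) := by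
    intro i
    rw [← ofReal_integral_eq_lintegral_ofReal ((key i).1.const_mul (η i))
      (Eventually.of_forall fun ω => mul_nonneg (hηpos i).le (hfnn i ω)), integral_const_mul]
  have htsum : ∫⁻ ω, (∑' i, ENNReal.ofReal (η i * f i ω)) ∂P ≠ ⊤ := by
    rw [lintegral_tsum haemeas]
    simp_rw [h1]
    rw [← ENNReal.ofReal_tsum_of_nonneg hA0 hsummable]
    exact ENNReal.ofReal_ne_top
  have hae : ∀ᵐ ω ∂P, (∑' i, ENNReal.ofReal (η i * f i ω)) < ⊤ :=
    ae_lt_top' (AEMeasurable.ennreal_tsum haemeas) htsum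
  filter_upwards [hae] with ω hω
  have hSummable : Summable (fun i => η i * f i ω) := by
    have ht := ENNReal.summable_toReal hω.ne
    refine ht.congr fun i => ?_
    rw [ENNReal.toReal_ofReal (mul_nonneg (hηpos i).le (hfnn i ω))]
  constructor
  · refine liminf_zero_of_summable I0 η _ hηpos (fun i => sq_nonneg _) hdiv0 ?_
    refine Summable.of_nonneg_of_le
      (fun i => Set.indicator_nonneg
        (fun j _ => mul_nonneg (hηpos j).le (sq_nonneg _)) i) (fun i => ?_) hSummable
    by_cases hi : i ∈ I0
    · rw [Set.indicator_of_mem hi]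
      simp only [hf, hi, if_true]
      exact le_refl _
    · rw [Set.indicator_of_notMem hi]
      exact mul_nonneg (hηpos i).le (hfnn i ω)
  · refine liminf_zero_of_summable Its η _ hηpos (fun i => sq_nonneg _) hdivts ?_
    refine Summable.of_nonneg_of_le
      (fun i => Set.indicator_nonneg
        (fun j _ => mul_nonneg (hηpos j).le (sq_nonneg _)) i) (fun i => ?_) hSummable
    by_cases hi : i ∈ Its
    · rw [Set.indicator_of_mem hi]
      have hni : i ∉ I0 := Set.disjoint_right.1 hdisj hi
      simp only [hf, hni, if_false]
      exact le_refl _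
    · rw [Set.indicator_of_notMem hi]
      exact mul_nonneg (hηpos i).le (hfnn i ω)
end
end

section
/- (ATE-SG, summability of weighted partial gradients) Under the assumptions of the ATE-SG partial-gradient convergence lemma — ℓ differentiable, bounded below, block-Lipschitz conditions with constants L0 and Lts, iterates w^{(i)} generated by ATE-SG over the partition ℕ = I0 ∪ Its with conditionally unbiased stochastic partial-gradient estimators whose conditional second moments are bounded by M2 times the squared true partial gradient norm plus M1, learning rates with Σ_i η_i² < ∞ and 1 − (L0/2) η_i M2 ≥ c for i ∈ I0, 1 − (Lts/2) η_i M2 ≥ c for i ∈ Its, some c ∈ (0,1) — the sequence ℓ(w^{(i)}) converges almost surely to a finite limit, and Σ_{i∈Its} η_i ‖∇_{wts}ℓ(w^{(i)})‖² + Σ_{i∈I0} η_i ‖∇_{w0}ℓ(w^{(i)})‖² < ∞ almost surely. -/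
open MeasureTheory Filter RealInnerProductSpace

noncomputable section

/-! ### Auxiliary lemmas -/

section Aux

lemma ateAux_inner_gradient_eq {E : Type*} [NormedAddCommGroup E] [InnerProductSpace ℝ E]
    [CompleteSpace E] (f : E → ℝ) (y v : E) :
    ⟪gradient f y, v⟫ = fderiv ℝ f y v := by
  rw [gradient, InnerProductSpace.toDual_symm_apply]

lemma ateAux_hasDerivAt_comp_line {E : Type*} [NormedAddCommGroup E] [InnerProductSpace ℝ E]
    [CompleteSpace E] {f : E → ℝ} (hf : Differentiable ℝ f) (x d : E) (t : ℝ) :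
    HasDerivAt (fun s : ℝ => f (x + s • d)) ⟪gradient f (x + t • d), d⟫ t := by
  have h1 : HasDerivAt (fun s : ℝ => x + s • d) d t := by
    simpa using ((hasDerivAt_id t).smul_const d).const_add x
  have h2 := (hf (x + t • d)).hasFDerivAt
  have := h2.comp_hasDerivAt t h1
  rw [ateAux_inner_gradient_eq f (x + t • d) d]; exact this

lemma ateAux_descent {E : Type*} [NormedAddCommGroup E] [InnerProductSpace ℝ E]
    [CompleteSpace E] {f : E → ℝ} (hf : Differentiable ℝ f) {L : ℝ}
    (hlip : ∀ x d, ‖gradient f (x + d) - gradient f x‖ ≤ L * ‖d‖) (x d : E) :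
    f (x + d) ≤ f x + ⟪gradient f x, d⟫ + L / 2 * ‖d‖ ^ 2 := by
  set φ : ℝ → ℝ := fun t => f (x + t • d) - t * ⟪gradient f x, d⟫ - L / 2 * ‖d‖ ^ 2 * t ^ 2
    with hφ
  have hder : ∀ t : ℝ, HasDerivAt φ
      (⟪gradient f (x + t • d), d⟫ - ⟪gradient f x, d⟫ - L * ‖d‖ ^ 2 * t) t := by
    intro t
    have h1 := ateAux_hasDerivAt_comp_line hf x d t
    have h2 : HasDerivAt (fun t : ℝ => t * ⟪gradient f x, d⟫) ⟪gradient f x, d⟫ t := by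
      simpa using (hasDerivAt_id t).mul_const ⟪gradient f x, d⟫
    have h3 : HasDerivAt (fun t : ℝ => L / 2 * ‖d‖ ^ 2 * t ^ 2) (L * ‖d‖ ^ 2 * t) t := by
      have := (hasDerivAt_pow 2 t).const_mul (L / 2 * ‖d‖ ^ 2)
      refine this.congr_deriv ?_
      norm_num
      ring
    exact (h1.sub h2).sub h3
  have hmono : AntitoneOn φ (Set.Icc 0 1) := by
    apply antitoneOn_of_deriv_nonpos (convex_Icc (0:ℝ) 1)
    · exact (fun t _ => ((hder t).differentiableAt.continuousAt.continuousWithinAt))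
    · intro t ht
      exact (hder t).differentiableAt.differentiableWithinAt
    · intro t ht
      rw [interior_Icc] at ht
      rw [(hder t).deriv]
      have h4 : ⟪gradient f (x + t • d), d⟫ - ⟪gradient f x, d⟫
          ≤ L * ‖d‖ ^ 2 * t := by
        rw [← inner_sub_left]
        calc ⟪gradient f (x + t • d) - gradient f x, d⟫
            ≤ ‖gradient f (x + t • d) - gradient f x‖ * ‖d‖ :=
              real_inner_le_norm _ _
          _ ≤ (L * ‖t • d‖) * ‖d‖ := by
              apply mul_le_mul_of_nonneg_right _ (norm_nonneg d)
              exact hlip x (t • d)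
          _ = L * ‖d‖ ^ 2 * |t| := by
              rw [norm_smul]; simp [Real.norm_eq_abs]; ring
          _ = L * ‖d‖ ^ 2 * t := by
              rw [abs_of_pos ht.1]
      linarith
  have h01 : φ 1 ≤ φ 0 := hmono (Set.left_mem_Icc.2 zero_le_one)
    (Set.right_mem_Icc.2 zero_le_one) zero_le_one
  simp only [hφ, one_smul, zero_smul, add_zero, one_mul, one_pow, mul_one, zero_mul,
    sub_zero, zero_pow, mul_zero] at h01
  linarith

lemma grad0_eq_fderiv {p0 pts : ℕ} {ℓ : Euc p0 × Euc pts → ℝ} (hdiff : Differentiable ℝ ℓ)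
    (w : Euc p0 × Euc pts) :
    grad0 ℓ w = (InnerProductSpace.toDual ℝ (Euc p0)).symm
      ((fderiv ℝ ℓ w).comp (ContinuousLinearMap.inl ℝ (Euc p0) (Euc pts))) := by
  have h : HasFDerivAt (fun u => ℓ (u, w.2))
      ((fderiv ℝ ℓ w).comp (ContinuousLinearMap.inl ℝ (Euc p0) (Euc pts))) w.1 := by
    have := (hdiff (w.1, w.2)).hasFDerivAt.comp (f := fun e => (e, w.2)) w.1 (hasFDerivAt_prodMk_left w.1 w.2)
    exact this
  rw [grad0, gradient, h.fderiv]

lemma gradTs_eq_fderiv {p0 pts : ℕ} {ℓ : Euc p0 × Euc pts → ℝ} (hdiff : Differentiable ℝ ℓ)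
    (w : Euc p0 × Euc pts) :
    gradTs ℓ w = (InnerProductSpace.toDual ℝ (Euc pts)).symm
      ((fderiv ℝ ℓ w).comp (ContinuousLinearMap.inr ℝ (Euc p0) (Euc pts))) := by
  have h : HasFDerivAt (fun v => ℓ (w.1, v))
      ((fderiv ℝ ℓ w).comp (ContinuousLinearMap.inr ℝ (Euc p0) (Euc pts))) w.2 := by
    have := (hdiff (w.1, w.2)).hasFDerivAt.comp w.2 (hasFDerivAt_prodMk_right w.1 w.2)
    exact this
  rw [gradTs, gradient, h.fderiv]

lemma measurable_grad0 {p0 pts : ℕ} {ℓ : Euc p0 × Euc pts → ℝ}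
    (hdiff : Differentiable ℝ ℓ) : Measurable (grad0 ℓ) := by
  have hφ : Continuous fun A : (Euc p0 × Euc pts) →L[ℝ] ℝ =>
      (InnerProductSpace.toDual ℝ (Euc p0)).symm
        (A.comp (ContinuousLinearMap.inl ℝ (Euc p0) (Euc pts))) := by
    refine Continuous.comp (LinearIsometryEquiv.continuous _) ?_
    exact ((ContinuousLinearMap.compL ℝ (Euc p0) (Euc p0 × Euc pts) ℝ).flip
      (ContinuousLinearMap.inl ℝ (Euc p0) (Euc pts))).continuous
  have heq : (grad0 ℓ) = fun w => (InnerProductSpace.toDual ℝ (Euc p0)).symm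
      ((fderiv ℝ ℓ w).comp (ContinuousLinearMap.inl ℝ (Euc p0) (Euc pts))) := by
    funext w; exact grad0_eq_fderiv hdiff w
  rw [heq]
  exact hφ.measurable.comp (measurable_fderiv ℝ ℓ)

lemma measurable_gradTs {p0 pts : ℕ} {ℓ : Euc p0 × Euc pts → ℝ}
    (hdiff : Differentiable ℝ ℓ) : Measurable (gradTs ℓ) := by
  have hφ : Continuous fun A : (Euc p0 × Euc pts) →L[ℝ] ℝ =>
      (InnerProductSpace.toDual ℝ (Euc pts)).symm
        (A.comp (ContinuousLinearMap.inr ℝ (Euc p0) (Euc pts))) := by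
    refine Continuous.comp (LinearIsometryEquiv.continuous _) ?_
    exact ((ContinuousLinearMap.compL ℝ (Euc pts) (Euc p0 × Euc pts) ℝ).flip
      (ContinuousLinearMap.inr ℝ (Euc p0) (Euc pts))).continuous
  have heq : (gradTs ℓ) = fun w => (InnerProductSpace.toDual ℝ (Euc pts)).symm
      ((fderiv ℝ ℓ w).comp (ContinuousLinearMap.inr ℝ (Euc p0) (Euc pts))) := by
    funext w; exact gradTs_eq_fderiv hdiff w
  rw [heq]
  exact hφ.measurable.comp (measurable_fderiv ℝ ℓ)

variable {α : Type*} {m mα : MeasurableSpace α} {μ : Measure α}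

lemma ateAux_condexp_clm (hm : m ≤ mα) [IsFiniteMeasure μ] {E F : Type*}
    [NormedAddCommGroup E] [NormedSpace ℝ E] [CompleteSpace E]
    [NormedAddCommGroup F] [NormedSpace ℝ F] [CompleteSpace F]
    (T : E →L[ℝ] F) {g : α → E} (hg : Integrable g μ) :
    μ[(fun x => T (g x))|m] =ᵐ[μ] fun x => T ((μ[g|m]) x) := by
  symm
  refine ae_eq_condExp_of_forall_setIntegral_eq hm (T.integrable_comp hg)
    (fun s _ _ => (T.integrable_comp integrable_condExp).integrableOn)
    (fun s hs hμs => ?_) ?_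
  · rw [T.integral_comp_comm integrable_condExp.integrableOn,
      setIntegral_condExp hm hg hs, T.integral_comp_comm hg.integrableOn]
  · exact (T.continuous.comp_stronglyMeasurable stronglyMeasurable_condExp).aestronglyMeasurable

lemma ateAux_condexp_memLp_two (hm : m ≤ mα) [IsFiniteMeasure μ] {E : Type*}
    [NormedAddCommGroup E] [InnerProductSpace ℝ E] [CompleteSpace E]
    {g : α → E} (hg : MemLp g 2 μ) :
    MemLp (μ[g|m]) 2 μ := by
  set G : Lp E 2 μ := hg.toLp g with hG
  have h1 : (↑(condExpL2 E ℝ hm G) : α → E) =ᵐ[μ] μ[g|m] := by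
    refine ae_eq_condExp_of_forall_setIntegral_eq hm (hg.integrable one_le_two)
      (fun s _ hμs => integrableOn_Lp_of_measure_ne_top _ one_le_two hμs.ne)
      (fun s hs hμs => ?_) ?_
    · rw [integral_condExpL2_eq hm G hs hμs.ne]
      exact setIntegral_congr_ae (hm s hs) ((hg.coeFn_toLp).mono fun x hx _ => hx)
    · exact lpMeas.aestronglyMeasurable _
  exact (Lp.memLp _).ae_eq h1

lemma ateAux_condexp_sq_integrable (hm : m ≤ mα) [IsFiniteMeasure μ] {E : Type*}
    [NormedAddCommGroup E] [InnerProductSpace ℝ E] [CompleteSpace E]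
    {g : α → E} (hg : MemLp g 2 μ) :
    Integrable (fun x => ‖(μ[g|m]) x‖ ^ 2) μ :=
  (memLp_two_iff_integrable_sq_norm
    (ateAux_condexp_memLp_two hm hg).aestronglyMeasurable).mp
    (ateAux_condexp_memLp_two hm hg)

lemma ateAux_abs_coord_le_norm {n : ℕ} (x : Euc n) (k : Fin n) : |x k| ≤ ‖x‖ := by
  have h := abs_real_inner_le_norm (EuclideanSpace.single k (1:ℝ)) x
  rwa [EuclideanSpace.inner_single_left, EuclideanSpace.norm_single, norm_one, one_mul,
    map_one, one_mul] at h

lemma ateAux_real_inner_euc {n : ℕ} (x y : Euc n) : ⟪x, y⟫ = ∑ k, x k * y k := by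
  rw [PiLp.inner_apply]
  simp [RCLike.inner_apply, mul_comm]

lemma ateAux_condexp_inner_pullout (hm : m ≤ mα) [IsFiniteMeasure μ] {n : ℕ}
    {G g : α → Euc n} (hG : StronglyMeasurable[m] G)
    (hGsq : Integrable (fun x => ‖G x‖ ^ 2) μ)
    (hg : Integrable g μ) (hgsq : Integrable (fun x => ‖g x‖ ^ 2) μ) :
    μ[(fun x => ⟪G x, g x⟫)|m] =ᵐ[μ] fun x => ⟪G x, (μ[g|m]) x⟫ := by
  have hprod : ∀ k : Fin n, Integrable (fun x => G x k * g x k) μ := by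
    intro k
    refine Integrable.mono' ((hGsq.add hgsq).const_mul (1/2)) ?_ ?_
    · exact ((EuclideanSpace.proj k).continuous.comp_aestronglyMeasurable
        (hG.mono hm).aestronglyMeasurable).mul
        ((EuclideanSpace.proj k).continuous.comp_aestronglyMeasurable hg.1)
    · refine Eventually.of_forall fun x => ?_
      have h1 : |G x k * g x k| ≤ ‖G x‖ * ‖g x‖ := by
        rw [abs_mul]
        exact mul_le_mul (ateAux_abs_coord_le_norm _ _) (ateAux_abs_coord_le_norm _ _)
          (abs_nonneg _) (norm_nonneg _)
      calc ‖G x k * g x k‖ = |G x k * g x k| := rfl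
        _ ≤ ‖G x‖ * ‖g x‖ := h1
        _ ≤ 1/2 * (‖G x‖^2 + ‖g x‖^2) := by nlinarith [sq_nonneg (‖G x‖ - ‖g x‖)]
  have hsum : (fun x => ⟪G x, g x⟫) = fun x => ∑ k, G x k * g x k := by
    funext x; exact ateAux_real_inner_euc _ _
  rw [hsum]
  have hstep1 : μ[(fun x => ∑ k, G x k * g x k)|m]
      =ᵐ[μ] ∑ k : Fin n, μ[(fun x => G x k * g x k)|m] := by
    have := condExp_finsetSum (m := m) (μ := μ) (s := Finset.univ)
      (f := fun (k : Fin n) (x : α) => G x k * g x k) (fun k _ => hprod k)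
    refine EventuallyEq.trans (condExp_congr_ae ?_) this
    refine Eventually.of_forall fun x => ?_
    simp
  refine hstep1.trans ?_
  have hstep2 : ∀ k : Fin n, μ[(fun x => G x k * g x k)|m]
      =ᵐ[μ] fun x => G x k * (μ[g|m]) x k := by
    intro k
    have hGk : StronglyMeasurable[m] (fun x => G x k) :=
      ((EuclideanSpace.proj k).continuous.comp_stronglyMeasurable hG)
    have hgk : Integrable (fun x => g x k) μ :=
      (EuclideanSpace.proj k : Euc n →L[ℝ] ℝ).integrable_comp hg
    have h1 : μ[(fun x => G x k) * (fun x => g x k)|m]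
        =ᵐ[μ] (fun x => G x k) * μ[(fun x => g x k)|m] :=
      condExp_mul_of_stronglyMeasurable_left hGk (by exact hprod k) hgk
    have h2 : μ[(fun x => g x k)|m] =ᵐ[μ] fun x => (μ[g|m]) x k := by
      have := ateAux_condexp_clm hm (EuclideanSpace.proj (𝕜 := ℝ) k) hg
      simpa using this
    refine EventuallyEq.trans (by exact h1) ?_
    filter_upwards [h2] with x hx
    simp only [Pi.mul_apply]
    rw [hx]
  have hall : (∑ k : Fin n, μ[(fun x => G x k * g x k)|m])
      =ᵐ[μ] fun x => ∑ k : Fin n, G x k * (μ[g|m]) x k := by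
    have h := (eventually_all_finset (Finset.univ : Finset (Fin n))).2
      (fun k _ => hstep2 k)
    filter_upwards [h] with x hx
    simp only [Finset.sum_apply]
    exact Finset.sum_congr rfl fun k hk => hx k hk
  refine hall.trans ?_
  refine Eventually.of_forall fun x => ?_
  exact (ateAux_real_inner_euc _ _).symm

lemma ateAux_step_bound {Ω : Type} {m0 : MeasurableSpace Ω} {P : Measure Ω}
    [IsProbabilityMeasure P]
    {m : MeasurableSpace Ω} (hm : m ≤ m0) {n : ℕ}
    {A A' : Ω → ℝ} {G g : Ω → Euc n} {L M1 M2 ηi c K : ℝ}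
    (hA : StronglyMeasurable[m] A) (hAint : Integrable A P) (hA'int : Integrable A' P)
    (hG : StronglyMeasurable[m] G)
    (hgint : Integrable g P) (hgsq : Integrable (fun ω => ‖g ω‖ ^ 2) P)
    (hmean : P[g|m] =ᵐ[P] G)
    (hsecond : P[(fun ω => ‖g ω‖ ^ 2)|m] ≤ᵐ[P] fun ω => M2 * ‖G ω‖ ^ 2 + M1)
    (hdesc : ∀ ω, A' ω ≤ A ω - ηi * ⟪G ω, g ω⟫ + L / 2 * ηi ^ 2 * ‖g ω‖ ^ 2)
    (hη : 0 < ηi) (hL : 0 < L)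
    (hsmall : c ≤ 1 - L / 2 * ηi * M2) (hKK : L / 2 * M1 ≤ K) :
    P[A'|m] ≤ᵐ[P] fun ω => A ω - c * (ηi * ‖G ω‖ ^ 2) + K * ηi ^ 2 := by
  have hgL2 : MemLp g 2 P := (memLp_two_iff_integrable_sq_norm hgint.1).2 hgsq
  have hGsq : Integrable (fun ω => ‖G ω‖ ^ 2) P := by
    refine (ateAux_condexp_sq_integrable hm hgL2).congr ?_
    filter_upwards [hmean] with ω h
    rw [h]
  have hBint : Integrable (fun ω => ⟪G ω, g ω⟫) P := by
    refine Integrable.mono' ((hGsq.add hgsq).const_mul (1/2)) ?_ ?_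
    · exact ((hG.mono hm).aestronglyMeasurable.inner hgint.1)
    · refine Eventually.of_forall fun ω => ?_
      have h1 : |⟪G ω, g ω⟫| ≤ ‖G ω‖ * ‖g ω‖ := abs_real_inner_le_norm _ _
      calc ‖⟪G ω, g ω⟫‖ = |⟪G ω, g ω⟫| := rfl
        _ ≤ ‖G ω‖ * ‖g ω‖ := h1
        _ ≤ 1/2 * (‖G ω‖ ^ 2 + ‖g ω‖ ^ 2) := by nlinarith [sq_nonneg (‖G ω‖ - ‖g ω‖)]
  set B : Ω → ℝ := fun ω => ⟪G ω, g ω⟫ with hB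
  set C : Ω → ℝ := fun ω => ‖g ω‖ ^ 2 with hC
  have hRHSint : Integrable (A - ηi • B + (L / 2 * ηi ^ 2) • C) P :=
    (hAint.sub (hBint.smul ηi)).add (hgsq.smul (L / 2 * ηi ^ 2))
  have hmono : P[A'|m] ≤ᵐ[P] P[A - ηi • B + (L / 2 * ηi ^ 2) • C|m] := by
    refine condExp_mono hA'int hRHSint (Eventually.of_forall fun ω => ?_)
    simpa [hB, hC, mul_assoc] using hdesc ω
  have h_add : P[A - ηi • B + (L / 2 * ηi ^ 2) • C|m]
      =ᵐ[P] P[A - ηi • B|m] + P[(L / 2 * ηi ^ 2) • C|m] :=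
    condExp_add (hAint.sub (hBint.smul ηi)) (hgsq.smul (L / 2 * ηi ^ 2)) m
  have h_sub : P[A - ηi • B|m] =ᵐ[P] P[A|m] - P[ηi • B|m] :=
    condExp_sub hAint (hBint.smul ηi) m
  have h_A : P[A|m] = A := condExp_of_stronglyMeasurable hm hA hAint
  have h_smulB : P[ηi • B|m] =ᵐ[P] ηi • P[B|m] := condExp_smul ηi B m
  have h_B : P[B|m] =ᵐ[P] fun ω => ‖G ω‖ ^ 2 := by
    refine (ateAux_condexp_inner_pullout hm hG hGsq hgint hgsq).trans ?_
    filter_upwards [hmean] with ω h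
    rw [h, real_inner_self_eq_norm_sq]
  have h_smulC : P[(L / 2 * ηi ^ 2) • C|m] =ᵐ[P] (L / 2 * ηi ^ 2) • P[C|m] :=
    condExp_smul (L / 2 * ηi ^ 2) C m
  filter_upwards [hmono, h_add, h_sub, h_smulB, h_B, h_smulC, hsecond] with ω e0 e1 e2 e3 e4 e5 e6
  have hGnn : (0:ℝ) ≤ ‖G ω‖ ^ 2 := sq_nonneg _
  have key1 : L / 2 * ηi * M2 * (ηi * ‖G ω‖ ^ 2) ≤ (1 - c) * (ηi * ‖G ω‖ ^ 2) :=
    mul_le_mul_of_nonneg_right (by linarith) (mul_nonneg hη.le hGnn)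
  have key2 : L / 2 * ηi ^ 2 * ((P[C|m]) ω) ≤ L / 2 * ηi ^ 2 * (M2 * ‖G ω‖ ^ 2 + M1) :=
    mul_le_mul_of_nonneg_left e6 (by positivity)
  have key3 : L / 2 * M1 * ηi ^ 2 ≤ K * ηi ^ 2 :=
    mul_le_mul_of_nonneg_right hKK (sq_nonneg _)
  have rearr : L / 2 * ηi ^ 2 * (M2 * ‖G ω‖ ^ 2 + M1)
      = L / 2 * ηi * M2 * (ηi * ‖G ω‖ ^ 2) + L / 2 * M1 * ηi ^ 2 := by ring
  calc (P[A'|m]) ω ≤ (P[A - ηi • B + (L / 2 * ηi ^ 2) • C|m]) ω := e0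
    _ = A ω - ηi * (P[B|m]) ω + L / 2 * ηi ^ 2 * (P[C|m]) ω := by
        rw [e1, Pi.add_apply, e2, Pi.sub_apply, h_A, e3, e5]
        simp [smul_eq_mul]
    _ = A ω - ηi * ‖G ω‖ ^ 2 + L / 2 * ηi ^ 2 * (P[C|m]) ω := by rw [e4]
    _ ≤ A ω - c * (ηi * ‖G ω‖ ^ 2) + K * ηi ^ 2 := by linarith [rearr]

end Aux

/-- ATE-SG, summability of weighted partial gradients: under the ATE-SG
assumptions, with square-summable learning rates small enough that `1 - (L0/2)ηᵢM2 ≥ c` on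
`I0` and `1 - (Lts/2)ηᵢM2 ≥ c` on `Its` for some `c ∈ (0,1)`, the sequence `ℓ(w⁽ⁱ⁾)`
converges almost surely to a finite limit and
`Σ_{i∈Its} ηᵢ‖∇_{wts}ℓ(w⁽ⁱ⁾)‖² + Σ_{i∈I0} ηᵢ‖∇_{w0}ℓ(w⁽ⁱ⁾)‖² < ∞` almost surely. -/
theorem ate_sg_weighted_partial_gradient_summable {p0 pts : ℕ}
    (ℓ : Euc p0 × Euc pts → ℝ) (hdiff : Differentiable ℝ ℓ)
    (ℓlow : ℝ) (hlow : ∀ v, ℓlow ≤ ℓ v)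
    (L0 Lts : ℝ) (hL0 : 0 < L0) (hLts : 0 < Lts)
    (hlip0 : ∀ (w0 d0 : Euc p0) (wts : Euc pts),
      ‖grad0 ℓ (w0 + d0, wts) - grad0 ℓ (w0, wts)‖ ≤ L0 * ‖d0‖)
    (hlipts : ∀ (w0 : Euc p0) (wts dts : Euc pts),
      ‖gradTs ℓ (w0, wts + dts) - gradTs ℓ (w0, wts)‖ ≤ Lts * ‖dts‖)
    (M1 M2 : ℝ) (hM1 : 0 < M1) (hM2 : 0 < M2)
    (I0 Its : Set ℕ) (hunion : I0 ∪ Its = Set.univ) (hdisj : Disjoint I0 Its)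
    (hI0inf : I0.Infinite) (hItsinf : Its.Infinite)
    {Ω : Type} {m0 : MeasurableSpace Ω} (P : Measure Ω) [IsProbabilityMeasure P]
    (ℱ : Filtration ℕ m0)
    (w : ℕ → Ω → Euc p0 × Euc pts) (hw : ∀ i, StronglyMeasurable[ℱ i] (w i))
    (g0 : ℕ → Ω → Euc p0) (gts : ℕ → Ω → Euc pts)
    (η : ℕ → ℝ) (hηpos : ∀ i, 0 < η i)
    (hg0int : ∀ i ∈ I0, Integrable (g0 i) P)
    (hg0sq : ∀ i ∈ I0, Integrable (fun ω => ‖g0 i ω‖ ^ 2) P)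
    (hg0mean : ∀ i ∈ I0, (P[g0 i|ℱ i]) =ᵐ[P] fun ω => grad0 ℓ (w i ω))
    (hg0second : ∀ i ∈ I0, (P[(fun ω => ‖g0 i ω‖ ^ 2)|ℱ i]) ≤ᵐ[P]
      fun ω => M2 * ‖grad0 ℓ (w i ω)‖ ^ 2 + M1)
    (hrec0 : ∀ i ∈ I0, ∀ ω, w (i + 1) ω = ((w i ω).1 - η i • g0 i ω, (w i ω).2))
    (hgtsint : ∀ i ∈ Its, Integrable (gts i) P)
    (hgtssq : ∀ i ∈ Its, Integrable (fun ω => ‖gts i ω‖ ^ 2) P)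
    (hgtsmean : ∀ i ∈ Its, (P[gts i|ℱ i]) =ᵐ[P] fun ω => gradTs ℓ (w i ω))
    (hgtssecond : ∀ i ∈ Its, (P[(fun ω => ‖gts i ω‖ ^ 2)|ℱ i]) ≤ᵐ[P]
      fun ω => M2 * ‖gradTs ℓ (w i ω)‖ ^ 2 + M1)
    (hrects : ∀ i ∈ Its, ∀ ω, w (i + 1) ω = ((w i ω).1, (w i ω).2 - η i • gts i ω))
    (hlint : ∀ i, Integrable (fun ω => ℓ (w i ω)) P)
    (hsumsq : Summable (fun i => η i ^ 2))
    (c : ℝ) (hc : c ∈ Set.Ioo (0 : ℝ) 1)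
    (hsmall0 : ∀ i ∈ I0, c ≤ 1 - L0 / 2 * η i * M2)
    (hsmallts : ∀ i ∈ Its, c ≤ 1 - Lts / 2 * η i * M2) :
    ∀ᵐ ω ∂P,
      (∃ c' : ℝ, Tendsto (fun i => ℓ (w i ω)) atTop (nhds c')) ∧
        Summable (fun i =>
          Its.indicator (fun j => η j * ‖gradTs ℓ (w j ω)‖ ^ 2) i +
            I0.indicator (fun j => η j * ‖grad0 ℓ (w j ω)‖ ^ 2) i) := by
  obtain ⟨hc0, hc1⟩ := hc
  set K : ℝ := max L0 Lts / 2 * M1 with hK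
  have hmaxpos : 0 < max L0 Lts := lt_max_iff.mpr (Or.inl hL0)
  have hKpos : 0 < K := by rw [hK]; positivity
  have hpartition : ∀ i : ℕ, (i ∈ I0 ∧ i ∉ Its) ∨ (i ∈ Its ∧ i ∉ I0) := by
    intro i
    have hmem : i ∈ I0 ∪ Its := hunion ▸ Set.mem_univ i
    rcases hmem with h | h
    · exact Or.inl ⟨h, Set.disjoint_left.mp hdisj h⟩
    · exact Or.inr ⟨h, Set.disjoint_right.mp hdisj h⟩
  set f : ℕ → Ω → ℝ := fun i ω =>
    Its.indicator (fun j => η j * ‖gradTs ℓ (w j ω)‖ ^ 2) i +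
      I0.indicator (fun j => η j * ‖grad0 ℓ (w j ω)‖ ^ 2) i with hf
  have hf0 : ∀ i, i ∈ I0 → i ∉ Its → ∀ ω, f i ω = η i * ‖grad0 ℓ (w i ω)‖ ^ 2 := by
    intro i hi hni ω
    simp [hf, Set.indicator_of_mem hi, Set.indicator_of_notMem hni]
  have hfts : ∀ i, i ∈ Its → i ∉ I0 → ∀ ω, f i ω = η i * ‖gradTs ℓ (w i ω)‖ ^ 2 := by
    intro i hi hni ω
    simp [hf, Set.indicator_of_mem hi, Set.indicator_of_notMem hni]
  have hfnonneg : ∀ i ω, 0 ≤ f i ω := by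
    intro i ω
    refine add_nonneg (Set.indicator_nonneg (fun j _ => ?_) i)
      (Set.indicator_nonneg (fun j _ => ?_) i) <;>
      exact mul_nonneg (hηpos j).le (sq_nonneg _)
  have hcontℓ : Continuous ℓ := hdiff.continuous
  have hG0m : ∀ i, StronglyMeasurable[ℱ i] (fun ω => grad0 ℓ (w i ω)) := fun i =>
    ((measurable_grad0 hdiff).comp (hw i).measurable).stronglyMeasurable
  have hGTm : ∀ i, StronglyMeasurable[ℱ i] (fun ω => gradTs ℓ (w i ω)) := fun i =>
    ((measurable_gradTs hdiff).comp (hw i).measurable).stronglyMeasurable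
  have hAm : ∀ i, StronglyMeasurable[ℱ i] (fun ω => ℓ (w i ω)) := fun i =>
    hcontℓ.comp_stronglyMeasurable (hw i)
  have hfm : ∀ i, StronglyMeasurable[ℱ i] (f i) := by
    intro i
    rcases hpartition i with ⟨h1, h2⟩ | ⟨h1, h2⟩
    · have heq : f i = fun ω => η i * (‖grad0 ℓ (w i ω)‖ * ‖grad0 ℓ (w i ω)‖) := by
        funext ω; rw [hf0 i h1 h2 ω]; ring
      rw [heq]
      exact ((hG0m i).norm.mul (hG0m i).norm).const_mul (η i)
    · have heq : f i = fun ω => η i * (‖gradTs ℓ (w i ω)‖ * ‖gradTs ℓ (w i ω)‖) := by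
        funext ω; rw [hfts i h1 h2 ω]; ring
      rw [heq]
      exact ((hGTm i).norm.mul (hGTm i).norm).const_mul (η i)
  have hG0sq : ∀ i ∈ I0, Integrable (fun ω => ‖grad0 ℓ (w i ω)‖ ^ 2) P := by
    intro i hi
    have hgL2 : MemLp (g0 i) 2 P :=
      (memLp_two_iff_integrable_sq_norm (hg0int i hi).1).2 (hg0sq i hi)
    refine (ateAux_condexp_sq_integrable (ℱ.le i) hgL2).congr ?_
    filter_upwards [hg0mean i hi] with ω h
    rw [h]
  have hGTsq : ∀ i ∈ Its, Integrable (fun ω => ‖gradTs ℓ (w i ω)‖ ^ 2) P := by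
    intro i hi
    have hgL2 : MemLp (gts i) 2 P :=
      (memLp_two_iff_integrable_sq_norm (hgtsint i hi).1).2 (hgtssq i hi)
    refine (ateAux_condexp_sq_integrable (ℱ.le i) hgL2).congr ?_
    filter_upwards [hgtsmean i hi] with ω h
    rw [h]
  have hfint : ∀ i, Integrable (f i) P := by
    intro i
    rcases hpartition i with ⟨h1, h2⟩ | ⟨h1, h2⟩
    · have heq : f i = fun ω => η i * ‖grad0 ℓ (w i ω)‖ ^ 2 := funext (hf0 i h1 h2)
      rw [heq]; exact (hG0sq i h1).const_mul (η i)
    · have heq : f i = fun ω => η i * ‖gradTs ℓ (w i ω)‖ ^ 2 := funext (hfts i h1 h2)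
      rw [heq]; exact (hGTsq i h1).const_mul (η i)
  -- pointwise descent inequalities
  have hdesc0 : ∀ i ∈ I0, ∀ ω, ℓ (w (i+1) ω) ≤ ℓ (w i ω)
      - η i * ⟪grad0 ℓ (w i ω), g0 i ω⟫ + L0 / 2 * η i ^ 2 * ‖g0 i ω‖ ^ 2 := by
    intro i hi ω
    have hpdiff : Differentiable ℝ (fun u : Euc p0 => ℓ (u, (w i ω).2)) :=
      hdiff.comp (differentiable_id.prodMk (differentiable_const _))
    have hlip : ∀ x d : Euc p0, ‖gradient (fun u => ℓ (u, (w i ω).2)) (x + d)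
        - gradient (fun u => ℓ (u, (w i ω).2)) x‖ ≤ L0 * ‖d‖ := fun x d => hlip0 x d (w i ω).2
    have hd := ateAux_descent hpdiff hlip ((w i ω).1) (-(η i • g0 i ω))
    have e1 : ⟪grad0 ℓ (w i ω), -(η i • g0 i ω)⟫
        = -(η i * ⟪grad0 ℓ (w i ω), g0 i ω⟫) := by
      rw [inner_neg_right, real_inner_smul_right]
    have e2 : ‖-(η i • g0 i ω)‖ ^ 2 = η i ^ 2 * ‖g0 i ω‖ ^ 2 := by
      rw [norm_neg, norm_smul, mul_pow, Real.norm_eq_abs, sq_abs]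
    calc ℓ (w (i+1) ω) = ℓ ((w i ω).1 + -(η i • g0 i ω), (w i ω).2) := by
          rw [hrec0 i hi ω, sub_eq_add_neg]
      _ ≤ ℓ (w i ω) + ⟪grad0 ℓ (w i ω), -(η i • g0 i ω)⟫
            + L0 / 2 * ‖-(η i • g0 i ω)‖ ^ 2 := hd
      _ = ℓ (w i ω) - η i * ⟪grad0 ℓ (w i ω), g0 i ω⟫
            + L0 / 2 * η i ^ 2 * ‖g0 i ω‖ ^ 2 := by rw [e1, e2]; ring
  have hdescts : ∀ i ∈ Its, ∀ ω, ℓ (w (i+1) ω) ≤ ℓ (w i ω)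
      - η i * ⟪gradTs ℓ (w i ω), gts i ω⟫ + Lts / 2 * η i ^ 2 * ‖gts i ω‖ ^ 2 := by
    intro i hi ω
    have hpdiff : Differentiable ℝ (fun v : Euc pts => ℓ ((w i ω).1, v)) :=
      hdiff.comp ((differentiable_const _).prodMk differentiable_id)
    have hlip : ∀ x d : Euc pts, ‖gradient (fun v => ℓ ((w i ω).1, v)) (x + d)
        - gradient (fun v => ℓ ((w i ω).1, v)) x‖ ≤ Lts * ‖d‖ :=
      fun x d => hlipts (w i ω).1 x d
    have hd := ateAux_descent hpdiff hlip ((w i ω).2) (-(η i • gts i ω))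
    have e1 : ⟪gradTs ℓ (w i ω), -(η i • gts i ω)⟫
        = -(η i * ⟪gradTs ℓ (w i ω), gts i ω⟫) := by
      rw [inner_neg_right, real_inner_smul_right]
    have e2 : ‖-(η i • gts i ω)‖ ^ 2 = η i ^ 2 * ‖gts i ω‖ ^ 2 := by
      rw [norm_neg, norm_smul, mul_pow, Real.norm_eq_abs, sq_abs]
    calc ℓ (w (i+1) ω) = ℓ ((w i ω).1, (w i ω).2 + -(η i • gts i ω)) := by
          rw [hrects i hi ω, sub_eq_add_neg]
      _ ≤ ℓ (w i ω) + ⟪gradTs ℓ (w i ω), -(η i • gts i ω)⟫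
            + Lts / 2 * ‖-(η i • gts i ω)‖ ^ 2 := hd
      _ = ℓ (w i ω) - η i * ⟪gradTs ℓ (w i ω), gts i ω⟫
            + Lts / 2 * η i ^ 2 * ‖gts i ω‖ ^ 2 := by rw [e1, e2]; ring
  -- one-step conditional expectation bound
  have hKK0 : L0 / 2 * M1 ≤ K := by
    rw [hK]
    have := le_max_left L0 Lts
    nlinarith [hM1.le]
  have hKKts : Lts / 2 * M1 ≤ K := by
    rw [hK]
    have := le_max_right L0 Lts
    nlinarith [hM1.le]
  have hstep : ∀ i, P[(fun ω => ℓ (w (i+1) ω))|ℱ i]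
      ≤ᵐ[P] fun ω => ℓ (w i ω) - c * f i ω + K * η i ^ 2 := by
    intro i
    rcases hpartition i with ⟨h1, h2⟩ | ⟨h1, h2⟩
    · have hsb := ateAux_step_bound (P := P) (ℱ.le i) (hAm i) (hlint i) (hlint (i+1))
        (hG0m i) (hg0int i h1) (hg0sq i h1) (hg0mean i h1) (hg0second i h1)
        (hdesc0 i h1) (hηpos i) hL0 (hsmall0 i h1) hKK0
      filter_upwards [hsb] with ω hω
      rw [hf0 i h1 h2 ω]
      simpa [mul_assoc] using hω
    · have hsb := ateAux_step_bound (P := P) (ℱ.le i) (hAm i) (hlint i) (hlint (i+1))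
        (hGTm i) (hgtsint i h1) (hgtssq i h1) (hgtsmean i h1) (hgtssecond i h1)
        (hdescts i h1) (hηpos i) hLts (hsmallts i h1) hKKts
      filter_upwards [hsb] with ω hω
      rw [hfts i h1 h2 ω]
      simpa [mul_assoc] using hω
  -- the supermartingale
  set Y : ℕ → Ω → ℝ := fun n ω => ℓ (w n ω) - ℓlow
      + c * ∑ j ∈ Finset.range n, f j ω - K * ∑ j ∈ Finset.range n, η j ^ 2 with hY
  have hYadp : StronglyAdapted ℱ Y := by
    intro n
    have h1 : StronglyMeasurable[ℱ n] fun ω => ∑ j ∈ Finset.range n, f j ω :=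
      Finset.stronglyMeasurable_fun_sum _ fun j hj =>
        (hfm j).mono (ℱ.mono (Finset.mem_range.mp hj).le)
    exact (((hAm n).sub stronglyMeasurable_const).add (h1.const_mul c)).sub
      stronglyMeasurable_const
  have hYint : ∀ n, Integrable (Y n) P := by
    intro n
    have h1 : Integrable (fun ω => ∑ j ∈ Finset.range n, f j ω) P :=
      integrable_finset_sum _ fun j _ => hfint j
    exact (((hlint n).sub (integrable_const ℓlow)).add (h1.const_mul c)).sub
      (integrable_const _)
  have hYsuper : Supermartingale Y ℱ P := by
    refine supermartingale_nat hYadp hYint fun n => ?_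
    set Bn : Ω → ℝ := fun ω => -ℓlow + c * ∑ j ∈ Finset.range (n+1), f j ω
        - K * ∑ j ∈ Finset.range (n+1), η j ^ 2 with hBn
    have hsplit : Y (n+1) = (fun ω => ℓ (w (n+1) ω)) + Bn := by
      funext ω; simp only [hY, hBn, Pi.add_apply]; ring
    have hBm : StronglyMeasurable[ℱ n] Bn := by
      have h1 : StronglyMeasurable[ℱ n] fun ω => ∑ j ∈ Finset.range (n+1), f j ω :=
        Finset.stronglyMeasurable_fun_sum _ fun j hj =>
          (hfm j).mono (ℱ.mono (Nat.lt_succ_iff.mp (Finset.mem_range.mp hj)))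
      exact (stronglyMeasurable_const.add (h1.const_mul c)).sub stronglyMeasurable_const
    have hBint : Integrable Bn P := by
      have h1 : Integrable (fun ω => ∑ j ∈ Finset.range (n+1), f j ω) P :=
        integrable_finset_sum _ fun j _ => hfint j
      exact ((integrable_const _).add (h1.const_mul c)).sub (integrable_const _)
    have hadd : P[Y (n+1)|ℱ n] =ᵐ[P] P[(fun ω => ℓ (w (n+1) ω))|ℱ n] + P[Bn|ℱ n] := by
      rw [hsplit]; exact condExp_add (hlint (n+1)) hBint _
    have hBfix : P[Bn|ℱ n] = Bn := condExp_of_stronglyMeasurable (ℱ.le n) hBm hBint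
    filter_upwards [hadd, hstep n] with ω e1 e2
    have e3 : (P[Y (n+1)|ℱ n]) ω = (P[(fun ω => ℓ (w (n+1) ω))|ℱ n]) ω + Bn ω := by
      rw [e1, Pi.add_apply, hBfix]
    rw [e3]
    have hsum1 : ∑ j ∈ Finset.range (n+1), f j ω
        = ∑ j ∈ Finset.range n, f j ω + f n ω := Finset.sum_range_succ _ _
    have hsum2 : ∑ j ∈ Finset.range (n+1), η j ^ 2
        = ∑ j ∈ Finset.range n, η j ^ 2 + η n ^ 2 := Finset.sum_range_succ _ _
    simp only [hY, hBn]
    rw [hsum1, hsum2] at *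
    linarith [e2]
  -- bounds
  set S : ℝ := ∑' j, η j ^ 2 with hS
  have hpart_le : ∀ n, ∑ j ∈ Finset.range n, η j ^ 2 ≤ S :=
    fun n => Summable.sum_le_tsum _ (fun j _ => sq_nonneg _) hsumsq
  have hSnn : 0 ≤ S := tsum_nonneg fun j => sq_nonneg _
  have hKS : 0 ≤ K * S := mul_nonneg hKpos.le hSnn
  have hYlb : ∀ n ω, -(K * S) ≤ Y n ω := by
    intro n ω
    have h1 : 0 ≤ ℓ (w n ω) - ℓlow := sub_nonneg.2 (hlow _)
    have h2 : 0 ≤ ∑ j ∈ Finset.range n, f j ω :=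
      Finset.sum_nonneg fun j _ => hfnonneg j ω
    have h3 : K * ∑ j ∈ Finset.range n, η j ^ 2 ≤ K * S :=
      mul_le_mul_of_nonneg_left (hpart_le n) hKpos.le
    have h4 : 0 ≤ c * ∑ j ∈ Finset.range n, f j ω := mul_nonneg hc0.le h2
    simp only [hY]
    linarith
  have hE0 : ∀ n, ∫ ω, Y n ω ∂P ≤ ∫ ω, Y 0 ω ∂P := by
    intro n
    have h := hYsuper.2.1 0 n (Nat.zero_le n)
    calc ∫ ω, Y n ω ∂P = ∫ ω, (P[Y n|ℱ 0]) ω ∂P := (integral_condExp (ℱ.le 0)).symm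
      _ ≤ ∫ ω, Y 0 ω ∂P := integral_mono_ae integrable_condExp (hYint 0) h
  set CC : ℝ := (∫ ω, Y 0 ω ∂P) + 2 * (K * S) with hCC
  have habs : ∀ n, ∫ ω, |Y n ω| ∂P ≤ CC := by
    intro n
    have h1 : ∀ ω, |Y n ω| ≤ Y n ω + 2 * (K * S) := by
      intro ω
      have hb := hYlb n ω
      rcases le_or_gt 0 (Y n ω) with h | h
      · rw [abs_of_nonneg h]; linarith
      · rw [abs_of_neg h]; linarith
    calc ∫ ω, |Y n ω| ∂P ≤ ∫ ω, (Y n ω + 2 * (K * S)) ∂P :=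
          integral_mono (hYint n).abs ((hYint n).add (integrable_const _))
            (fun ω => h1 ω)
      _ = (∫ ω, Y n ω ∂P) + 2 * (K * S) := by
          rw [integral_add (hYint n) (integrable_const _), integral_const]
          simp
      _ ≤ CC := by rw [hCC]; linarith [hE0 n]
  have hbdd : ∀ n, eLpNorm ((-Y) n) 1 P ≤ ENNReal.ofReal CC := by
    intro n
    have h1 : eLpNorm ((-Y) n) 1 P = eLpNorm (Y n) 1 P := by
      have : (-Y) n = -(Y n) := rfl
      rw [this, eLpNorm_neg]
    rw [h1, eLpNorm_one_eq_lintegral_enorm,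
      ← ofReal_integral_norm_eq_lintegral_enorm (hYint n)]
    refine ENNReal.ofReal_le_ofReal ?_
    simpa [Real.norm_eq_abs] using habs n
  have hconv := hYsuper.neg.exists_ae_tendsto_of_bdd
    (R := (ENNReal.ofReal CC).toNNReal) ?_
  swap
  · intro n
    have := hbdd n
    rwa [ENNReal.coe_toNNReal (by simp)]
  filter_upwards [hconv] with ω hω
  obtain ⟨z, hz⟩ := hω
  have hYt : Tendsto (fun n => Y n ω) atTop (nhds (-z)) := by
    have := hz.neg
    simpa using this
  obtain ⟨M, hM⟩ := hYt.bddAbove_range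
  have hMle : ∀ n, Y n ω ≤ M := fun n => hM ⟨n, rfl⟩
  have hsumf : Summable (fun j => f j ω) := by
    refine summable_of_sum_range_le (c := (M + K * S) / c) (fun j => hfnonneg j ω) ?_
    intro n
    have h1 : Y n ω ≤ M := hMle n
    have h2 : 0 ≤ ℓ (w n ω) - ℓlow := sub_nonneg.2 (hlow _)
    have h3 : K * ∑ j ∈ Finset.range n, η j ^ 2 ≤ K * S :=
      mul_le_mul_of_nonneg_left (hpart_le n) hKpos.le
    rw [le_div_iff₀ hc0]
    simp only [hY] at h1
    linarith
  refine ⟨⟨-z + ℓlow - c * (∑' j, f j ω) + K * S, ?_⟩, hsumf⟩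
  have hT1 : Tendsto (fun n => ∑ j ∈ Finset.range n, f j ω) atTop (nhds (∑' j, f j ω)) :=
    hsumf.hasSum.tendsto_sum_nat
  have hT2 : Tendsto (fun n => ∑ j ∈ Finset.range n, η j ^ 2) atTop (nhds S) :=
    hsumsq.hasSum.tendsto_sum_nat
  have heq : (fun n => ℓ (w n ω)) = fun n => Y n ω + ℓlow
      - c * ∑ j ∈ Finset.range n, f j ω + K * ∑ j ∈ Finset.range n, η j ^ 2 := by
    funext n; simp only [hY]; ring
  rw [heq]
  exact (((hYt.add_const ℓlow).sub (hT1.const_mul c)).add (hT2.const_mul K))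
end
end
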